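/- arXiv:0710.0768 — 3 statements merged into one kernel-verified Lean document; each statement's English description precedes it below -/
import Mathlib

section
/- Let A be a self-adjoint operator in ℋ and n ∈ ℤ₊. Then C_n(A) is a *-subalgebra of B(ℋ): it is a linear subspace, and if X, Y ∈ C_n(A) then X* ∈ C_n(A) and XY ∈ C_n(A). -/
set_option linter.unusedSectionVars false
set_option linter.unnecessarySimpa false
set_option maxHeartbeats 1000000


open scoped ComplexOrder
open Classical

variable {ℋ : Type*} [NormedAddCommGroup ℋ] [InnerProductSpace ℂ ℋ] [CompleteSpace ℋ]

/-- The everywhere-defined extension (by `0` outside the domain) of an unbounded operator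
`Aop` with domain the submodule `D`. -/
noncomputable def Aext (D : Submodule ℂ ℋ) (Aop : ↥D →ₗ[ℂ] ℋ) (ψ : ℋ) : ℋ :=
  if h : ψ ∈ D then Aop ⟨ψ, h⟩ else 0

/-- `Dom(A^n)`: the set of vectors to which `A` can be applied `n` times. -/
def domPow (D : Submodule ℂ ℋ) (Aop : ↥D →ₗ[ℂ] ℋ) (n : ℕ) : Set ℋ :=
  {ψ : ℋ | ∀ k, k < n → (Aext D Aop)^[k] ψ ∈ D}

/-- The sesquilinear form `α_n(ξ,η) = Σ_{k=0}^{n} C(n,k)(−1)^k ⟨X A^k ξ, A^{n−k} η⟩`,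
defined (meaningfully) on `Dom(A^n)`. -/
noncomputable def commForm (D : Submodule ℂ ℋ) (Aop : ↥D →ₗ[ℂ] ℋ)
    (X : ℋ →L[ℂ] ℋ) (n : ℕ) (ξ η : ℋ) : ℂ :=
  ∑ k ∈ Finset.range (n + 1),
    (n.choose k : ℂ) * (-1) ^ k *
      (inner ℂ (X ((Aext D Aop)^[k] ξ)) ((Aext D Aop)^[n - k] η) : ℂ)

/-- `ad_A^n X` exists in `B(ℋ)` and equals the bounded operator `Z`: the form `α_n` is
represented by `Z` on `Dom(A^n)`. -/
def AdExistsN (D : Submodule ℂ ℋ) (Aop : ↥D →ₗ[ℂ] ℋ) (n : ℕ) (X Z : ℋ →L[ℂ] ℋ) : Prop :=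
  ∀ ξ ∈ domPow D Aop n, ∀ η ∈ domPow D Aop n,
    commForm D Aop X n ξ η = (inner ℂ (Z ξ) η : ℂ)

/-- `X ∈ C_n(A)`: the multiple commutators `ad_A^k X` exist in `B(ℋ)` for `k = 0,…,n`. -/
def InCn (D : Submodule ℂ ℋ) (Aop : ↥D →ₗ[ℂ] ℋ) (n : ℕ) (X : ℋ →L[ℂ] ℋ) : Prop :=
  ∀ k, k ≤ n → ∃ Z : ℋ →L[ℂ] ℋ, AdExistsN D Aop k X Z

/-- Self-adjointness of the (in general unbounded) operator `Aop` with domain `D`: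
it is densely defined, symmetric, and its domain is maximal. -/
def IsSelfAdjointOp (D : Submodule ℂ ℋ) (Aop : ↥D →ₗ[ℂ] ℋ) : Prop :=
  Dense (D : Set ℋ) ∧
    (∀ u v : ↥D, (inner ℂ (Aop u) (v : ℋ) : ℂ) = inner ℂ (u : ℋ) (Aop v)) ∧
    ∀ v w : ℋ, (∀ u : ↥D, (inner ℂ (Aop u) v : ℂ) = inner ℂ (u : ℋ) w) → v ∈ D


section Basics
variable (D : Submodule ℂ ℋ) (Aop : ↥D →ₗ[ℂ] ℋ)

local notation "A" => Aext D Aop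
local notation "dom" => domPow D Aop

lemma Aext_of_mem {ψ : ℋ} (h : ψ ∈ D) : A ψ = Aop ⟨ψ, h⟩ := dif_pos h

lemma Aext_add_of_mem {ψ φ : ℋ} (hψ : ψ ∈ D) (hφ : φ ∈ D) :
    A (ψ + φ) = A ψ + A φ := by
  rw [Aext_of_mem D Aop hψ, Aext_of_mem D Aop hφ, Aext_of_mem D Aop (D.add_mem hψ hφ),
    ← map_add]
  rfl

lemma Aext_smul_of_mem {ψ : ℋ} (c : ℂ) (hψ : ψ ∈ D) :
    A (c • ψ) = c • A ψ := by
  rw [Aext_of_mem D Aop hψ, Aext_of_mem D Aop (D.smul_mem c hψ), ← map_smul]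
  rfl

lemma Aext_sub_of_mem {ψ φ : ℋ} (hψ : ψ ∈ D) (hφ : φ ∈ D) :
    A (ψ - φ) = A ψ - A φ := by
  rw [Aext_of_mem D Aop hψ, Aext_of_mem D Aop hφ, Aext_of_mem D Aop (D.sub_mem hψ hφ),
    ← map_sub]
  rfl

lemma mem_domPow_zero (ψ : ℋ) : ψ ∈ dom 0 := fun k hk => absurd hk (Nat.not_lt_zero k)

lemma domPow_succ_iff {ψ : ℋ} {k : ℕ} :
    ψ ∈ dom (k + 1) ↔ ψ ∈ D ∧ A ψ ∈ dom k := by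
  constructor
  · intro h
    refine ⟨h 0 (Nat.succ_pos k), fun j hj => ?_⟩
    have := h (j + 1) (Nat.succ_lt_succ hj)
    rwa [Function.iterate_succ_apply] at this
  · rintro ⟨h0, h⟩ j hj
    cases j with
    | zero => exact h0
    | succ j =>
      rw [Function.iterate_succ_apply]
      exact h j (Nat.lt_of_succ_lt_succ hj)

lemma mem_D_of_domPow {ψ : ℋ} {k : ℕ} (h : ψ ∈ dom (k + 1)) : ψ ∈ D :=
  (domPow_succ_iff D Aop |>.1 h).1

lemma Aext_mem_domPow {ψ : ℋ} {k : ℕ} (h : ψ ∈ dom (k + 1)) : A ψ ∈ dom k :=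
  (domPow_succ_iff D Aop |>.1 h).2

lemma mem_domPow_succ {ψ : ℋ} {k : ℕ} (h0 : ψ ∈ D) (h : A ψ ∈ dom k) :
    ψ ∈ dom (k + 1) := (domPow_succ_iff D Aop).2 ⟨h0, h⟩

lemma domPow_mono {k m : ℕ} (hkm : k ≤ m) {ψ : ℋ} (h : ψ ∈ dom m) : ψ ∈ dom k :=
  fun j hj => h j (lt_of_lt_of_le hj hkm)

lemma mem_domPow_one {ψ : ℋ} (h : ψ ∈ D) : ψ ∈ dom 1 := by
  rw [domPow_succ_iff]
  exact ⟨h, mem_domPow_zero D Aop _⟩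

lemma iter_mem_domPow {ψ : ℋ} {m k : ℕ} (hk : k ≤ m) (h : ψ ∈ dom m) :
    A^[k] ψ ∈ dom (m - k) := by
  induction k generalizing ψ m with
  | zero => simpa using h
  | succ k ih =>
    obtain ⟨m', rfl⟩ : ∃ m', m = m' + 1 := ⟨m - 1, by omega⟩
    rw [Function.iterate_succ_apply]
    have : m' + 1 - (k + 1) = m' - k := by omega
    rw [this]
    exact ih (by omega) (Aext_mem_domPow D Aop h)

lemma domPow_add {ψ φ : ℋ} {k : ℕ} (hψ : ψ ∈ dom k) (hφ : φ ∈ dom k) :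
    ψ + φ ∈ dom k := by
  induction k generalizing ψ φ with
  | zero => exact mem_domPow_zero D Aop _
  | succ k ih =>
    rw [domPow_succ_iff] at hψ hφ ⊢
    refine ⟨D.add_mem hψ.1 hφ.1, ?_⟩
    rw [Aext_add_of_mem D Aop hψ.1 hφ.1]
    exact ih hψ.2 hφ.2

lemma domPow_smul {ψ : ℋ} {k : ℕ} (c : ℂ) (hψ : ψ ∈ dom k) : c • ψ ∈ dom k := by
  induction k generalizing ψ with
  | zero => exact mem_domPow_zero D Aop _
  | succ k ih =>
    rw [domPow_succ_iff] at hψ ⊢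
    refine ⟨D.smul_mem c hψ.1, ?_⟩
    rw [Aext_smul_of_mem D Aop c hψ.1]
    exact ih hψ.2

end Basics


lemma Aext_of_mem' (D : Submodule ℂ ℋ) (Aop : ↥D →ₗ[ℂ] ℋ) {ψ : ℋ} (h : ψ ∈ D) :
    Aext D Aop ψ = Aop ⟨ψ, h⟩ := dif_pos h

section SA
variable (D : Submodule ℂ ℋ) (Aop : ↥D →ₗ[ℂ] ℋ) (hA : IsSelfAdjointOp D Aop)
include hA

local notation "A" => Aext D Aop
local notation "⟪" x ", " y "⟫" => (inner ℂ x y : ℂ)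

/-- identification via density of D -/
lemma dense_ext {a b : ℋ} (h : ∀ w ∈ D, ⟪w, a⟫ = ⟪w, b⟫) : a = b := by
  have hc : Continuous fun w : ℋ => (⟪w, a⟫ : ℂ) := Continuous.inner continuous_id continuous_const
  have hc' : Continuous fun w : ℋ => (⟪w, b⟫ : ℂ) := Continuous.inner continuous_id continuous_const
  have : (fun w : ℋ => (⟪w, a⟫ : ℂ)) = fun w => ⟪w, b⟫ :=
    Continuous.ext_on hA.1 hc hc' h
  have h2 : ⟪a - b, a⟫ = ⟪a - b, b⟫ := congrFun this (a - b)
  have : ⟪a - b, a - b⟫ = 0 := by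
    rw [inner_sub_right, h2, sub_self]
  simpa [sub_eq_zero] using inner_self_eq_zero.mp this

lemma Aext_symm {u v : ℋ} (hu : u ∈ D) (hv : v ∈ D) : ⟪A u, v⟫ = ⟪u, A v⟫ := by
  rw [Aext_of_mem' D Aop hu, Aext_of_mem' D Aop hv]
  exact hA.2.1 ⟨u, hu⟩ ⟨v, hv⟩

lemma Aext_max {v w : ℋ} (h : ∀ u ∈ D, ⟪A u, v⟫ = ⟪u, w⟫) : v ∈ D ∧ A v = w := by
  have hv : v ∈ D := by
    refine hA.2.2 v w fun u => ?_
    have := h (u : ℋ) u.2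
    rwa [Aext_of_mem' D Aop u.2] at this
  refine ⟨hv, dense_ext D Aop hA fun u hu => ?_⟩
  rw [← Aext_symm D Aop hA hu hv]
  exact h u hu

/-- graph of A is closed (sequential version) -/
lemma graph_closed {u w : ℋ} (v : ℕ → ℋ) (hv : ∀ t, v t ∈ D)
    (h1 : Filter.Tendsto v Filter.atTop (nhds u))
    (h2 : Filter.Tendsto (fun t => A (v t)) Filter.atTop (nhds w)) :
    u ∈ D ∧ A u = w := by
  refine Aext_max D Aop hA fun x hx => ?_
  have l1 : Filter.Tendsto (fun t => ⟪A x, v t⟫) Filter.atTop (nhds ⟪A x, u⟫) :=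
    Filter.Tendsto.inner tendsto_const_nhds h1
  have l2 : Filter.Tendsto (fun t => ⟪x, A (v t)⟫) Filter.atTop (nhds ⟪x, w⟫) :=
    Filter.Tendsto.inner tendsto_const_nhds h2
  have : (fun t => ⟪A x, v t⟫) = fun t => ⟪x, A (v t)⟫ := by
    funext t; exact Aext_symm D Aop hA hx (hv t)
  rw [this] at l1
  exact tendsto_nhds_unique l1 l2

/-- ⟪A u, u⟫ is real -/
lemma Aext_inner_self_re {u : ℋ} (hu : u ∈ D) : (starRingEnd ℂ) ⟪A u, u⟫ = ⟪A u, u⟫ := by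
  rw [inner_conj_symm, ← Aext_symm D Aop hA hu hu]

/-- the key norm identity ‖Au + im u‖² = ‖Au‖² + m²‖u‖² -/
lemma norm_sq_reg {u : ℋ} (hu : u ∈ D) (m : ℕ) :
    ‖A u + ((m : ℂ) * Complex.I) • u‖ ^ 2 = ‖A u‖ ^ 2 + (m : ℝ) ^ 2 * ‖u‖ ^ 2 := by
  have hre : RCLike.re ⟪A u, ((m : ℂ) * Complex.I) • u⟫ = 0 := by
    rw [inner_smul_right]
    have hreal := Aext_inner_self_re D Aop hA hu
    have him : (⟪A u, u⟫).im = 0 := Complex.conj_eq_iff_im.mp hreal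
    simp [Complex.mul_re, Complex.mul_im, him]
  have := @norm_add_sq ℂ _ _ _ _ (A u) (((m : ℂ) * Complex.I) • u)
  rw [this]
  have : ‖((m : ℂ) * Complex.I) • u‖ = (m : ℝ) * ‖u‖ := by
    rw [norm_smul]
    simp [Complex.norm_def, Complex.normSq_mul]
  rw [hre, this]
  ring
end SA


section Surj
variable (D : Submodule ℂ ℋ) (Aop : ↥D →ₗ[ℂ] ℋ) (hA : IsSelfAdjointOp D Aop)
local notation "A" => Aext D Aop
local notation "⟪" x ", " y "⟫" => (inner ℂ x y : ℂ)

include hA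

lemma norm_le_reg {u : ℋ} (hu : u ∈ D) (m : ℕ) :
    (m : ℝ) * ‖u‖ ≤ ‖A u + ((m : ℂ) * Complex.I) • u‖ ∧
      ‖A u‖ ≤ ‖A u + ((m : ℂ) * Complex.I) • u‖ := by
  have h := norm_sq_reg D Aop hA hu m
  constructor
  · nlinarith [norm_nonneg (A u + ((m : ℂ) * Complex.I) • u), norm_nonneg u,
      norm_nonneg (A u), mul_nonneg (Nat.cast_nonneg' (α := ℝ) m) (norm_nonneg u)]
  · nlinarith [norm_nonneg (A u + ((m : ℂ) * Complex.I) • u), norm_nonneg u,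
      norm_nonneg (A u), sq_nonneg ((m:ℝ) * ‖u‖)]

lemma reg_surj (m : ℕ) (hm : 1 ≤ m) (y : ℋ) :
    ∃ u, u ∈ D ∧ A u + ((m : ℂ) * Complex.I) • u = y := by
  classical
  set c : ℂ := (m : ℂ) * Complex.I with hc
  have hcne : c ≠ 0 := by
    have : (m : ℂ) ≠ 0 := Nat.cast_ne_zero.mpr (by omega)
    exact mul_ne_zero this Complex.I_ne_zero
  set L : ↥D →ₗ[ℂ] ℋ := Aop + c • D.subtype with hL
  have hLval : ∀ u : ↥D, L u = A (u : ℋ) + c • (u : ℋ) := by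
    intro u
    simp [hL, Aext_of_mem' D Aop u.2]
  set S : Submodule ℂ ℋ := LinearMap.range L with hS
  -- density of the range
  have hdense : Dense (S : Set ℋ) := by
    rw [Submodule.dense_iff_topologicalClosure_eq_top, Submodule.topologicalClosure_eq_top_iff,
      Submodule.eq_bot_iff]
    intro v hv
    have hv' : ∀ u ∈ D, ⟪A u, v⟫ = ⟪u, c • v⟫ := by
      intro u hu
      have h0 : ⟪A u + c • u, v⟫ = 0 :=
        (Submodule.mem_orthogonal S v).1 hv _ ⟨⟨u, hu⟩, (hLval ⟨u, hu⟩)⟩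
      rw [inner_add_left, inner_smul_left] at h0
      rw [inner_smul_right]
      have hcc : (starRingEnd ℂ) c = -c := by simp [hc]
      rw [hcc] at h0
      linear_combination h0
    obtain ⟨hvD, hAv⟩ := Aext_max D Aop hA hv'
    have h1 : ⟪A v, v⟫ = -c * ⟪v, v⟫ := by
      rw [hAv, inner_smul_left]
      have : (starRingEnd ℂ) c = -c := by simp [hc]
      rw [this]
    have h2 : ⟪A v, v⟫ = c * ⟪v, v⟫ := by
      rw [Aext_symm D Aop hA hvD hvD, hAv, inner_smul_right]
    have h3 : c * ⟪v, v⟫ = 0 := by linear_combination (h1 - h2) / 2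
    rcases mul_eq_zero.1 h3 with h | h
    · exact absurd h hcne
    · exact inner_self_eq_zero.mp h
  -- now surjectivity via completeness and the closed graph
  have hy : y ∈ closure (S : Set ℋ) := hdense y
  rw [mem_closure_iff_seq_limit] at hy
  obtain ⟨x, hxS, hxy⟩ := hy
  choose u huL using fun t => hxS t
  -- u : ℕ → ↥D with L (u t) = x t
  have hxval : ∀ t, x t = A (↑(u t)) + c • (↑(u t) : ℋ) := by
    intro t
    rw [← huL t, hLval]
  have hcauchy : CauchySeq (fun t => ((u t : ℋ))) := by
    have hxc : CauchySeq x := hxy.cauchySeq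
    rw [Metric.cauchySeq_iff] at hxc ⊢
    intro ε hε
    obtain ⟨N, hN⟩ := hxc ε hε
    refine ⟨N, fun s hs t ht => ?_⟩
    have hb := (norm_le_reg D Aop hA (D.sub_mem (u s).2 (u t).2) m).1
    have hNst := hN s hs t ht
    rw [dist_eq_norm] at hNst
    rw [dist_eq_norm]
    have hsub : A ((u s : ℋ) - (u t : ℋ)) + c • ((u s : ℋ) - (u t : ℋ)) = x s - x t := by
      rw [Aext_sub_of_mem D Aop (u s).2 (u t).2, hxval s, hxval t]
      rw [smul_sub]
      abel
    rw [hsub] at hb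
    have hm1 : (1 : ℝ) ≤ (m : ℝ) := by exact_mod_cast hm
    have : ‖(u s : ℋ) - (u t : ℋ)‖ ≤ ‖x s - x t‖ := by
      nlinarith [norm_nonneg ((u s : ℋ) - (u t : ℋ))]
    exact lt_of_le_of_lt this hNst
  obtain ⟨w, hw⟩ := cauchySeq_tendsto_of_complete hcauchy
  have hAu : Filter.Tendsto (fun t => A ((u t : ℋ))) Filter.atTop (nhds (y - c • w)) := by
    have : (fun t => A ((u t : ℋ))) = fun t => x t - c • ((u t : ℋ)) := by
      funext t
      rw [hxval t]
      abel
    rw [this]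
    exact hxy.sub (hw.const_smul c)
  obtain ⟨hwD, hAw⟩ := graph_closed D Aop hA _ (fun t => (u t).2) hw hAu
  exact ⟨w, hwD, by rw [hAw]; abel⟩

end Surj


/-- the coefficient `i(t+1)` -/
noncomputable def creg (t : ℕ) : ℂ := ((t + 1 : ℕ) : ℂ) * Complex.I

lemma norm_creg (t : ℕ) : ‖creg t‖ = ((t + 1 : ℕ) : ℝ) := by
  rw [creg, norm_mul, Complex.norm_natCast, Complex.norm_I, mul_one]

section Reg
variable (D : Submodule ℂ ℋ) (Aop : ↥D →ₗ[ℂ] ℋ) (hA : IsSelfAdjointOp D Aop)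
local notation "A" => Aext D Aop
local notation "dom" => domPow D Aop
local notation "⟪" x ", " y "⟫" => (inner ℂ x y : ℂ)
include hA

/-- the resolvent-type regularizer: `reg t y = (A + i(t+1))⁻¹ y` -/
noncomputable def reg (t : ℕ) (y : ℋ) : ℋ :=
  (reg_surj D Aop hA (t + 1) (Nat.le_add_left 1 t) y).choose

lemma reg_mem (t : ℕ) (y : ℋ) : reg D Aop hA t y ∈ D :=
  (reg_surj D Aop hA (t + 1) (Nat.le_add_left 1 t) y).choose_spec.1

lemma reg_spec (t : ℕ) (y : ℋ) :
    A (reg D Aop hA t y) + creg t • reg D Aop hA t y = y :=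
  (reg_surj D Aop hA (t + 1) (Nat.le_add_left 1 t) y).choose_spec.2

lemma reg_norm (t : ℕ) (y : ℋ) :
    ((t + 1 : ℕ) : ℝ) * ‖reg D Aop hA t y‖ ≤ ‖y‖ ∧ ‖A (reg D Aop hA t y)‖ ≤ ‖y‖ := by
  have h := norm_le_reg D Aop hA (reg_mem D Aop hA t y) (t + 1)
  rw [show (((t+1:ℕ) : ℂ) * Complex.I) = creg t from rfl, reg_spec D Aop hA t y] at h
  exact h

lemma reg_inj {t : ℕ} {u : ℋ} (hu : u ∈ D) (h : A u + creg t • u = 0) : u = 0 := by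
  have hb := (norm_le_reg D Aop hA hu (t + 1)).1
  rw [show (((t+1:ℕ) : ℂ) * Complex.I) = creg t from rfl, h] at hb
  simp only [norm_zero] at hb
  have hpos : (0 : ℝ) < ((t + 1 : ℕ) : ℝ) := by positivity
  have h3 : ‖u‖ ≤ 0 := by nlinarith [norm_nonneg u]
  exact norm_eq_zero.mp (le_antisymm h3 (norm_nonneg _))

lemma reg_unique {t : ℕ} {u y : ℋ} (hu : u ∈ D) (h : A u + creg t • u = y) :
    reg D Aop hA t y = u := by
  have hrD := reg_mem D Aop hA t y
  have h2 := reg_spec D Aop hA t y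
  set r := reg D Aop hA t y with hr
  clear_value r
  have hd : A (r - u) + creg t • (r - u) = 0 := by
    rw [Aext_sub_of_mem D Aop hrD hu, smul_sub]
    have : (A r + creg t • r) - (A u + creg t • u) = 0 := by rw [h2, h, sub_self]
    calc A r - A u + (creg t • r - creg t • u)
        = (A r + creg t • r) - (A u + creg t • u) := by abel
      _ = 0 := this
  have := reg_inj D Aop hA (D.sub_mem hrD hu) hd
  rwa [sub_eq_zero] at this

lemma reg_sub (t : ℕ) (a b : ℋ) :
    reg D Aop hA t (a - b) = reg D Aop hA t a - reg D Aop hA t b := by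
  have ha := reg_spec D Aop hA t a
  have hb := reg_spec D Aop hA t b
  have haD := reg_mem D Aop hA t a
  have hbD := reg_mem D Aop hA t b
  set ra := reg D Aop hA t a; clear_value ra
  set rb := reg D Aop hA t b; clear_value rb
  refine reg_unique D Aop hA (D.sub_mem haD hbD) ?_
  rw [Aext_sub_of_mem D Aop haD hbD, smul_sub, ← ha, ← hb]
  abel

lemma reg_comm {t : ℕ} {u : ℋ} (hu : u ∈ D) :
    A (reg D Aop hA t u) = reg D Aop hA t (A u) := by
  have hrD := reg_mem D Aop hA t u
  have hspec := reg_spec D Aop hA t u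
  set r := reg D Aop hA t u with hr
  clear_value r
  have hAr : A r = u - creg t • r := by rw [← hspec]; abel
  have hArD : A r ∈ D := hAr ▸ D.sub_mem hu (D.smul_mem _ hrD)
  refine (reg_unique D Aop hA hArD ?_).symm
  have expand : A (A r) = A u - creg t • A r := by
    conv_lhs => rw [hAr]
    rw [Aext_sub_of_mem D Aop hu (D.smul_mem _ hrD), Aext_smul_of_mem D Aop _ hrD]
  rw [expand]
  abel

lemma reg_domPow {t k : ℕ} {y : ℋ} (hy : y ∈ dom k) :
    reg D Aop hA t y ∈ dom (k + 1) := by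
  induction k generalizing y with
  | zero =>
    exact mem_domPow_one D Aop (reg_mem D Aop hA t y)
  | succ k ih =>
    have hyD : y ∈ D := mem_D_of_domPow D Aop hy
    refine mem_domPow_succ D Aop (reg_mem D Aop hA t y) ?_
    rw [reg_comm D Aop hA hyD]
    exact ih (Aext_mem_domPow D Aop hy)

/-- the regularizing approximation of the identity -/
noncomputable def Phi (t : ℕ) (y : ℋ) : ℋ := creg t • reg D Aop hA t y

lemma Phi_mem_D (t : ℕ) (y : ℋ) : Phi D Aop hA t y ∈ D :=
  D.smul_mem _ (reg_mem D Aop hA t y)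

lemma Phi_norm_le (t : ℕ) (y : ℋ) : ‖Phi D Aop hA t y‖ ≤ ‖y‖ := by
  have h := (reg_norm D Aop hA t y).1
  rw [Phi, norm_smul, norm_creg]
  exact h

lemma Phi_sub (t : ℕ) (a b : ℋ) :
    Phi D Aop hA t (a - b) = Phi D Aop hA t a - Phi D Aop hA t b := by
  rw [Phi, Phi, Phi, reg_sub D Aop hA, smul_sub]

lemma Phi_comm {t : ℕ} {u : ℋ} (hu : u ∈ D) :
    A (Phi D Aop hA t u) = Phi D Aop hA t (A u) := by
  rw [Phi, Phi, Aext_smul_of_mem D Aop _ (reg_mem D Aop hA t u), reg_comm D Aop hA hu]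

lemma Phi_mem {t k : ℕ} {y : ℋ} (hy : y ∈ dom k) : Phi D Aop hA t y ∈ dom (k + 1) :=
  domPow_smul D Aop _ (reg_domPow D Aop hA hy)

lemma Phi_close {t : ℕ} {w : ℋ} (hw : w ∈ D) :
    ((t + 1 : ℕ) : ℝ) * ‖Phi D Aop hA t w - w‖ ≤ ‖A w‖ := by
  have hspec := reg_spec D Aop hA t w
  have hcomm := reg_comm D Aop hA (t := t) hw
  have hn := (reg_norm D Aop hA t (A w)).1
  rw [← hcomm] at hn
  set r := reg D Aop hA t w with hr
  have h1 : Phi D Aop hA t w - w = -(A r) := by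
    rw [Phi, ← hr, ← hspec]
    abel
  rw [h1, norm_neg]
  exact hn

lemma Phi_tendsto (w : ℋ) :
    Filter.Tendsto (fun t => Phi D Aop hA t w) Filter.atTop (nhds w) := by
  rw [Metric.tendsto_atTop]
  intro ε hε
  obtain ⟨w', hw'D, hww'⟩ : ∃ w', w' ∈ D ∧ ‖w - w'‖ < ε / 3 := by
    have := Metric.mem_closure_iff.1 (hA.1 w) (ε / 3) (by linarith)
    obtain ⟨w', hw', hd⟩ := this
    exact ⟨w', hw', by rwa [dist_eq_norm] at hd⟩
  obtain ⟨N, hN⟩ : ∃ N : ℕ, ‖A w'‖ < ((N + 1 : ℕ) : ℝ) * (ε / 3) := by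
    obtain ⟨N, hN⟩ := exists_nat_gt (‖A w'‖ / (ε / 3))
    refine ⟨N, ?_⟩
    rw [div_lt_iff₀ (by linarith : (0:ℝ) < ε / 3)] at hN
    have : (N : ℝ) ≤ ((N + 1 : ℕ) : ℝ) := by push_cast; linarith
    nlinarith [hN]
  refine ⟨N, fun t ht => ?_⟩
  rw [dist_eq_norm]
  have b1 : ‖Phi D Aop hA t w - Phi D Aop hA t w'‖ ≤ ‖w - w'‖ := by
    rw [← Phi_sub D Aop hA]
    exact Phi_norm_le D Aop hA t _
  have b2 := Phi_close D Aop hA (t := t) hw'D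
  have hcast : ((N + 1 : ℕ) : ℝ) ≤ ((t + 1 : ℕ) : ℝ) := Nat.cast_le.mpr (by omega)
  have hpos : (0 : ℝ) < ((t + 1 : ℕ) : ℝ) := by positivity
  have b2' : ‖Phi D Aop hA t w' - w'‖ < ε / 3 := by
    by_contra hcon
    push_neg at hcon
    have : ((t + 1 : ℕ) : ℝ) * (ε / 3) ≤ ((t + 1 : ℕ) : ℝ) * ‖Phi D Aop hA t w' - w'‖ :=
      mul_le_mul_of_nonneg_left hcon (le_of_lt hpos)
    nlinarith [hN, hcast, b2]
  have tri : ‖Phi D Aop hA t w - w‖ ≤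
      ‖Phi D Aop hA t w - Phi D Aop hA t w'‖ + ‖Phi D Aop hA t w' - w'‖ + ‖w' - w‖ := by
    have : Phi D Aop hA t w - w =
        (Phi D Aop hA t w - Phi D Aop hA t w') + (Phi D Aop hA t w' - w') + (w' - w) := by abel
    rw [this]
    exact norm_add₃_le
  have : ‖w' - w‖ = ‖w - w'‖ := norm_sub_rev _ _
  linarith [tri, b1, b2', hww']

end Reg

section Core
variable (D : Submodule ℂ ℋ) (Aop : ↥D →ₗ[ℂ] ℋ) (hA : IsSelfAdjointOp D Aop)
local notation "A" => Aext D Aop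
local notation "dom" => domPow D Aop
include hA

lemma Phi_iter_mem {t k : ℕ} (p : ℕ) {u : ℋ} (hu : u ∈ dom k) :
    (Phi D Aop hA t)^[p] u ∈ dom (k + p) := by
  induction p generalizing u k with
  | zero => simpa using hu
  | succ p ih =>
    rw [Function.iterate_succ_apply]
    have := ih (k := k + 1) (u := Phi D Aop hA t u) (Phi_mem D Aop hA (t := t) hu)
    rwa [show k + 1 + p = k + (p + 1) by omega] at this

lemma Phi_iter_contract (t p : ℕ) (a b : ℋ) :
    ‖(Phi D Aop hA t)^[p] a - (Phi D Aop hA t)^[p] b‖ ≤ ‖a - b‖ := by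
  induction p generalizing a b with
  | zero => simp
  | succ p ih =>
    rw [Function.iterate_succ_apply', Function.iterate_succ_apply', ← Phi_sub D Aop hA]
    exact le_trans (Phi_norm_le D Aop hA t _) (ih a b)

lemma Phi_iter_tendsto (p : ℕ) (w : ℋ) :
    Filter.Tendsto (fun t => (Phi D Aop hA t)^[p] w) Filter.atTop (nhds w) := by
  induction p with
  | zero => simpa using tendsto_const_nhds
  | succ p ih =>
    rw [tendsto_iff_norm_sub_tendsto_zero] at ih ⊢
    have hb : ∀ t : ℕ, ‖(Phi D Aop hA t)^[p+1] w - w‖ ≤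
        ‖(Phi D Aop hA t)^[p] w - w‖ + ‖Phi D Aop hA t w - w‖ := by
      intro t
      have e : (Phi D Aop hA t)^[p+1] w - w =
          ((Phi D Aop hA t)^[p] (Phi D Aop hA t w) - (Phi D Aop hA t)^[p] w)
            + ((Phi D Aop hA t)^[p] w - w) := by
        rw [Function.iterate_succ_apply]
        abel
      rw [e]
      refine le_trans (norm_add_le _ _) ?_
      have := Phi_iter_contract D Aop hA t p (Phi D Aop hA t w) w
      linarith [this]
    have hphi : Filter.Tendsto (fun t => ‖Phi D Aop hA t w - w‖) Filter.atTop (nhds 0) := by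
      have := Phi_tendsto D Aop hA w
      rwa [tendsto_iff_norm_sub_tendsto_zero] at this
    have hsum : Filter.Tendsto
        (fun t => ‖(Phi D Aop hA t)^[p] w - w‖ + ‖Phi D Aop hA t w - w‖)
        Filter.atTop (nhds 0) := by
      have := ih.add hphi
      simpa using this
    exact squeeze_zero (fun t => norm_nonneg _) hb hsum

lemma Phi_iter_comm {t p : ℕ} {u : ℋ} (hu : u ∈ D) :
    A ((Phi D Aop hA t)^[p] u) = (Phi D Aop hA t)^[p] (A u) := by
  induction p generalizing u with
  | zero => simp
  | succ p ih =>
    rw [Function.iterate_succ_apply, Function.iterate_succ_apply]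
    rw [ih (Phi_mem_D D Aop hA t u), Phi_comm D Aop hA hu]

lemma graph_core (p : ℕ) {u : ℋ} (hu : u ∈ D) :
    ∃ v : ℕ → ℋ, (∀ t, v t ∈ dom p) ∧
      Filter.Tendsto v Filter.atTop (nhds u) ∧
      Filter.Tendsto (fun t => A (v t)) Filter.atTop (nhds (A u)) := by
  refine ⟨fun t => (Phi D Aop hA t)^[p] u, fun t => ?_, Phi_iter_tendsto D Aop hA p u, ?_⟩
  · exact domPow_mono D Aop (by omega : p ≤ 1 + p)
      (Phi_iter_mem D Aop hA (t := t) p (mem_domPow_one D Aop hu))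
  · have : (fun t => A ((Phi D Aop hA t)^[p] u)) = fun t => (Phi D Aop hA t)^[p] (A u) := by
      funext t
      exact Phi_iter_comm D Aop hA hu
    rw [this]
    exact Phi_iter_tendsto D Aop hA p (A u)

end Core

lemma pascal_sum (f : ℕ → ℂ) (m : ℕ) :
    ∑ k ∈ Finset.range (m + 2), ((m+1).choose k : ℂ) * (-1) ^ k * f k =
      ∑ k ∈ Finset.range (m + 1), (m.choose k : ℂ) * (-1) ^ k * f k -
        ∑ k ∈ Finset.range (m + 1), (m.choose k : ℂ) * (-1) ^ k * f (k + 1) := by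
  rw [Finset.sum_range_succ' (fun k => ((m+1).choose k : ℂ) * (-1) ^ k * f k) (m + 1)]
  have step : ∀ k, (((m+1).choose (k+1) : ℂ)) * (-1) ^ (k+1) * f (k+1) =
      (m.choose (k+1) : ℂ) * (-1) ^ (k+1) * f (k+1)
        - (m.choose k : ℂ) * (-1) ^ k * f (k+1) := by
    intro k
    rw [Nat.choose_succ_succ' m k]
    push_cast
    ring
  rw [Finset.sum_congr rfl (fun k _ => step k), Finset.sum_sub_distrib]
  have e1 : ∑ k ∈ Finset.range (m + 1), (m.choose (k+1) : ℂ) * (-1) ^ (k+1) * f (k+1) =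
      ∑ k ∈ Finset.range (m + 1), (m.choose k : ℂ) * (-1) ^ k * f k
        - ((m.choose 0 : ℂ) * (-1) ^ 0 * f 0) := by
    have h2 : ∑ k ∈ Finset.range (m + 2), (m.choose k : ℂ) * (-1) ^ k * f k =
        ∑ k ∈ Finset.range (m + 1), (m.choose (k+1) : ℂ) * (-1) ^ (k+1) * f (k+1)
          + (m.choose 0 : ℂ) * (-1) ^ 0 * f 0 :=
      Finset.sum_range_succ' (fun k => (m.choose k : ℂ) * (-1) ^ k * f k) (m + 1)
    have h3 : ∑ k ∈ Finset.range (m + 2), (m.choose k : ℂ) * (-1) ^ k * f k =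
        ∑ k ∈ Finset.range (m + 1), (m.choose k : ℂ) * (-1) ^ k * f k := by
      rw [Finset.sum_range_succ]
      simp [Nat.choose_succ_self]
    rw [h3] at h2
    linear_combination -h2
  rw [e1]
  simp only [Nat.choose_zero_right, pow_zero]
  ring

section CF
variable (D : Submodule ℂ ℋ) (Aop : ↥D →ₗ[ℂ] ℋ)
local notation "A" => Aext D Aop
local notation "dom" => domPow D Aop
local notation "⟪" x ", " y "⟫" => (inner ℂ x y : ℂ)

lemma commForm_succ (X : ℋ →L[ℂ] ℋ) (m : ℕ) (ξ η : ℋ) :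
    commForm D Aop X (m + 1) ξ η =
      commForm D Aop X m ξ (A η) - commForm D Aop X m (A ξ) η := by
  have := pascal_sum (fun k => (⟪X (A^[k] ξ), A^[m + 1 - k] η⟫ : ℂ)) m
  rw [commForm, commForm, commForm]
  have e1 : ∀ k ∈ Finset.range (m + 1),
      (m.choose k : ℂ) * (-1) ^ k * ⟪X (A^[k] ξ), A^[m - k] (A η)⟫ =
        (m.choose k : ℂ) * (-1) ^ k * ⟪X (A^[k] ξ), A^[m + 1 - k] η⟫ := by
    intro k hk
    rw [Finset.mem_range] at hk
    congr 2
    rw [← Function.iterate_succ_apply A (m - k) η]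
    congr 1
    omega
  have e2 : ∀ k ∈ Finset.range (m + 1),
      (m.choose k : ℂ) * (-1) ^ k * ⟪X (A^[k] (A ξ)), A^[m - k] η⟫ =
        (m.choose k : ℂ) * (-1) ^ k * ⟪X (A^[k+1] ξ), A^[m + 1 - (k+1)] η⟫ := by
    intro k hk
    rw [Finset.mem_range] at hk
    rw [show m + 1 - (k + 1) = m - k from by omega, ← Function.iterate_succ_apply A k ξ]
  rw [Finset.sum_congr rfl e1, Finset.sum_congr rfl e2]
  exact this

lemma lemmaR {X Z Z' : ℋ →L[ℂ] ℋ} {j : ℕ} (hZ : AdExistsN D Aop j X Z)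
    (hZ' : AdExistsN D Aop (j + 1) X Z')
    {v u : ℋ} (hv : v ∈ dom (j + 1)) (hu : u ∈ dom (j + 1)) :
    (⟪Z' v, u⟫ : ℂ) = ⟪Z v, A u⟫ - ⟪Z (A v), u⟫ := by
  have h1 := hZ' v hv u hu
  rw [commForm_succ] at h1
  have h2 := hZ v (domPow_mono D Aop (Nat.le_succ j) hv) (A u) (Aext_mem_domPow D Aop hu)
  have h3 := hZ (A v) (Aext_mem_domPow D Aop hv) u (domPow_mono D Aop (Nat.le_succ j) hu)
  rw [h2, h3] at h1
  exact h1.symm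

end CF

section Closure
variable (D : Submodule ℂ ℋ) (Aop : ↥D →ₗ[ℂ] ℋ)
local notation "A" => Aext D Aop
local notation "dom" => domPow D Aop
local notation "⟪" x ", " y "⟫" => (inner ℂ x y : ℂ)

lemma T0_eq {X Z : ℋ →L[ℂ] ℋ} (h : AdExistsN D Aop 0 X Z) : Z = X := by
  ext ξ
  refine ext_inner_right ℂ fun η => ?_
  have := h ξ (mem_domPow_zero D Aop ξ) η (mem_domPow_zero D Aop η)
  rw [commForm] at this
  simpa using this.symm

lemma commForm_add_left (X Y : ℋ →L[ℂ] ℋ) (k : ℕ) (ξ η : ℋ) :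
    commForm D Aop (X + Y) k ξ η = commForm D Aop X k ξ η + commForm D Aop Y k ξ η := by
  rw [commForm, commForm, commForm, ← Finset.sum_add_distrib]
  refine Finset.sum_congr rfl fun j _ => ?_
  rw [ContinuousLinearMap.add_apply, inner_add_left]
  ring

lemma commForm_smul_left (c : ℂ) (X : ℋ →L[ℂ] ℋ) (k : ℕ) (ξ η : ℋ) :
    commForm D Aop (c • X) k ξ η = (starRingEnd ℂ) c * commForm D Aop X k ξ η := by
  rw [commForm, commForm, Finset.mul_sum]
  refine Finset.sum_congr rfl fun j _ => ?_
  rw [ContinuousLinearMap.smul_apply, inner_smul_left]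
  ring

lemma commForm_adjoint (X : ℋ →L[ℂ] ℋ) (k : ℕ) (ξ η : ℋ) :
    commForm D Aop (ContinuousLinearMap.adjoint X) k ξ η =
      (-1 : ℂ) ^ k * (starRingEnd ℂ) (commForm D Aop X k η ξ) := by
  rw [commForm, commForm, map_sum, Finset.mul_sum]
  have hrefl := Finset.sum_range_reflect
    (fun j => (-1 : ℂ) ^ k * (starRingEnd ℂ)
      ((k.choose j : ℂ) * (-1) ^ j * ⟪X (A^[j] η), A^[k - j] ξ⟫)) (k + 1)
  rw [← hrefl]
  refine Finset.sum_congr rfl fun j hj => ?_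
  rw [Finset.mem_range] at hj
  have hj' : j ≤ k := by omega
  have e0 : k + 1 - 1 - j = k - j := by omega
  rw [e0]
  rw [map_mul, map_mul, map_natCast, map_pow, map_neg, map_one, inner_conj_symm]
  rw [Nat.choose_symm hj']
  have e1 : k - (k - j) = j := by omega
  rw [e1]
  have e2 : (-1 : ℂ) ^ k * ((k.choose j : ℂ) * (-1) ^ (k - j) *
      ⟪A^[j] ξ, X (A^[k - j] η)⟫) =
      (k.choose j : ℂ) * ((-1) ^ k * (-1) ^ (k - j)) * ⟪A^[j] ξ, X (A^[k - j] η)⟫ := by ring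
  rw [e2]
  have e3 : (-1 : ℂ) ^ k * (-1 : ℂ) ^ (k - j) = (-1) ^ j := by
    rw [← pow_add]
    have : k + (k - j) = j + 2 * (k - j) := by omega
    rw [this, pow_add, pow_mul]
    simp
  rw [e3, ContinuousLinearMap.adjoint_inner_left]

lemma adj_rep {X Z : ℋ →L[ℂ] ℋ} {k : ℕ} (hZ : AdExistsN D Aop k X Z) :
    AdExistsN D Aop k (ContinuousLinearMap.adjoint X)
      (((-1 : ℂ) ^ k) • ContinuousLinearMap.adjoint Z) := by
  intro ξ hξ η hη
  rw [commForm_adjoint D Aop X k ξ η, hZ η hη ξ hξ]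
  rw [inner_conj_symm, ContinuousLinearMap.smul_apply, inner_smul_left]
  rw [map_pow, map_neg, map_one, ContinuousLinearMap.adjoint_inner_left]

/-- unsigned Pascal recursion -/
lemma pascal_sum_pos (g : ℕ → ℂ) (m : ℕ) :
    ∑ j ∈ Finset.range (m + 2), ((m+1).choose j : ℂ) * g j =
      ∑ j ∈ Finset.range (m + 1), (m.choose j : ℂ) * g j +
        ∑ j ∈ Finset.range (m + 1), (m.choose j : ℂ) * g (j + 1) := by
  rw [Finset.sum_range_succ' (fun j => ((m+1).choose j : ℂ) * g j) (m + 1)]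
  have step : ∀ j, (((m+1).choose (j+1) : ℂ)) * g (j+1) =
      (m.choose (j+1) : ℂ) * g (j+1) + (m.choose j : ℂ) * g (j+1) := by
    intro j
    rw [Nat.choose_succ_succ' m j]
    push_cast
    ring
  rw [Finset.sum_congr rfl (fun j _ => step j), Finset.sum_add_distrib]
  have e1 : ∑ j ∈ Finset.range (m + 1), (m.choose (j+1) : ℂ) * g (j+1) =
      ∑ j ∈ Finset.range (m + 1), (m.choose j : ℂ) * g j - (m.choose 0 : ℂ) * g 0 := by
    have h2 := Finset.sum_range_succ' (fun j => (m.choose j : ℂ) * g j) (m + 1)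
    have h3 : ∑ j ∈ Finset.range (m + 2), (m.choose j : ℂ) * g j =
        ∑ j ∈ Finset.range (m + 1), (m.choose j : ℂ) * g j := by
      rw [Finset.sum_range_succ]
      simp [Nat.choose_succ_self]
    rw [h3] at h2
    linear_combination -h2
  rw [e1]
  simp only [Nat.choose_zero_right, pow_zero, Nat.cast_one]
  ring

end Closure

section Product
variable (D : Submodule ℂ ℋ) (Aop : ↥D →ₗ[ℂ] ℋ) (hA : IsSelfAdjointOp D Aop)
local notation "A" => Aext D Aop
local notation "dom" => domPow D Aop
local notation "⟪" x ", " y "⟫" => (inner ℂ x y : ℂ)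
include hA

lemma lemmaR_ext {X Z Z' : ℋ →L[ℂ] ℋ} {j : ℕ} (hZ : AdExistsN D Aop j X Z)
    (hZ' : AdExistsN D Aop (j + 1) X Z')
    {v u : ℋ} (hv : v ∈ dom (j + 1)) (hu : u ∈ D) :
    (⟪Z' v, u⟫ : ℂ) = ⟪Z v, A u⟫ - ⟪Z (A v), u⟫ := by
  obtain ⟨w, hwdom, hw1, hw2⟩ := graph_core D Aop hA (j + 1) hu
  have hpt : ∀ t, (⟪Z' v, w t⟫ : ℂ) = ⟪Z v, A (w t)⟫ - ⟪Z (A v), w t⟫ :=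
    fun t => lemmaR D Aop hZ hZ' hv (hwdom t)
  have l1 : Filter.Tendsto (fun t => (⟪Z' v, w t⟫ : ℂ)) Filter.atTop (nhds ⟪Z' v, u⟫) :=
    Filter.Tendsto.inner tendsto_const_nhds hw1
  have l2 : Filter.Tendsto (fun t => (⟪Z v, A (w t)⟫ - ⟪Z (A v), w t⟫ : ℂ)) Filter.atTop
      (nhds (⟪Z v, A u⟫ - ⟪Z (A v), u⟫)) :=
    (Filter.Tendsto.inner tendsto_const_nhds hw2).sub
      (Filter.Tendsto.inner tendsto_const_nhds hw1)
  have : (fun t => (⟪Z' v, w t⟫ : ℂ)) = fun t => ⟪Z v, A (w t)⟫ - ⟪Z (A v), w t⟫ := funext hpt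
  rw [this] at l1
  exact tendsto_nhds_unique l1 l2

/-- pointwise commutation step: `A (S_i u) = S_i (A u) + S_{i+1} u` -/
lemma PC_step {n : ℕ} {Y : ℋ →L[ℂ] ℋ} {S : ℕ → ℋ →L[ℂ] ℋ}
    (hS : ∀ k ≤ n, AdExistsN D Aop k Y (S k))
    {i : ℕ} (hi : i + 1 ≤ n) {u : ℋ} (hu : u ∈ dom (i + 1)) :
    S i u ∈ D ∧ A (S i u) = S i (A u) + S (i + 1) u := by
  refine Aext_max D Aop hA fun w hw => ?_
  have key := lemmaR_ext D Aop hA (hS i (by omega)) (hS (i + 1) hi) hu hw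
  have : (⟪A w, S i u⟫ : ℂ) = (starRingEnd ℂ) ⟪S i u, A w⟫ := (inner_conj_symm _ _).symm
  rw [this]
  have key' : (⟪S i u, A w⟫ : ℂ) = ⟪S (i+1) u, w⟫ + ⟪S i (A u), w⟫ := by
    rw [key]; ring
  rw [key', map_add, inner_conj_symm, inner_conj_symm, ← inner_add_right, add_comm]

/-- pointwise domain preservation for the commutator representatives -/
lemma PC_mem {n : ℕ} {Y : ℋ →L[ℂ] ℋ} {S : ℕ → ℋ →L[ℂ] ℋ}
    (hS : ∀ k ≤ n, AdExistsN D Aop k Y (S k))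
    (k : ℕ) {i : ℕ} (hik : i + k ≤ n) {u : ℋ} (hu : u ∈ dom (i + k)) :
    S i u ∈ dom k := by
  induction k generalizing i u with
  | zero => exact mem_domPow_zero D Aop _
  | succ k ih =>
    have hu1 : u ∈ dom (i + 1) := domPow_mono D Aop (by omega) hu
    obtain ⟨hmem, hcomm⟩ := PC_step D Aop hA hS (by omega) hu1
    refine mem_domPow_succ D Aop hmem ?_
    rw [hcomm]
    refine domPow_add D Aop ?_ ?_
    · have hu' : u ∈ dom (i + k + 1) := by
        rwa [show i + (k + 1) = i + k + 1 from by omega] at hu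
      exact ih (i := i) (by omega) (Aext_mem_domPow D Aop hu')
    · exact ih (i := i + 1) (by omega) (domPow_mono D Aop (by omega) hu)

/-- the product representative at level `m` -/
noncomputable def Wprod (T S : ℕ → ℋ →L[ℂ] ℋ) (m : ℕ) : ℋ →L[ℂ] ℋ :=
  ∑ j ∈ Finset.range (m + 1), (m.choose j : ℂ) • ((T j).comp (S (m - j)))

omit hA in
lemma Wprod_inner (T S : ℕ → ℋ →L[ℂ] ℋ) (m : ℕ) (ξ η : ℋ) :
    (⟪Wprod T S m ξ, η⟫ : ℂ) =
      ∑ j ∈ Finset.range (m + 1), (m.choose j : ℂ) * ⟪T j (S (m - j) ξ), η⟫ := by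
  rw [Wprod]
  rw [ContinuousLinearMap.sum_apply, sum_inner]
  refine Finset.sum_congr rfl fun j _ => ?_
  rw [ContinuousLinearMap.smul_apply, inner_smul_left, map_natCast]
  rfl

lemma prod_rep {n : ℕ} {X Y : ℋ →L[ℂ] ℋ} {T S : ℕ → ℋ →L[ℂ] ℋ}
    (hT : ∀ k ≤ n, AdExistsN D Aop k X (T k))
    (hS : ∀ k ≤ n, AdExistsN D Aop k Y (S k)) :
    ∀ m, m ≤ n → AdExistsN D Aop m (X.comp Y) (Wprod T S m) := by
  intro m
  induction m with
  | zero =>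
    intro _ ξ hξ η hη
    have hT0 : T 0 = X := T0_eq D Aop (hT 0 (Nat.zero_le n))
    have hS0 : S 0 = Y := T0_eq D Aop (hS 0 (Nat.zero_le n))
    rw [Wprod_inner, commForm]
    simp [hT0, hS0]
  | succ m ih =>
    intro hm ξ hξ η hη
    have hmn : m ≤ n := by omega
    have ihm := ih hmn
    -- recursion for the form
    rw [commForm_succ]
    have hξm : ξ ∈ dom m := domPow_mono D Aop (by omega) hξ
    have hηm : η ∈ dom m := domPow_mono D Aop (by omega) hη
    rw [ihm ξ hξm (A η) (Aext_mem_domPow D Aop hη),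
        ihm (A ξ) (Aext_mem_domPow D Aop hξ) η hηm]
    rw [Wprod_inner, Wprod_inner, Wprod_inner]
    rw [← Finset.sum_sub_distrib]
    -- termwise computation
    have term : ∀ j ∈ Finset.range (m + 1),
        (m.choose j : ℂ) * ⟪T j (S (m - j) ξ), A η⟫ -
          (m.choose j : ℂ) * ⟪T j (S (m - j) (A ξ)), η⟫ =
        (m.choose j : ℂ) * (⟪T (j+1) (S (m + 1 - (j+1)) ξ), η⟫ +
          ⟪T j (S (m + 1 - j) ξ), η⟫) := by
      intro j hj
      rw [Finset.mem_range] at hj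
      have hjm : j ≤ m := by omega
      set i := m - j with hi
      have hv : S i ξ ∈ dom (j + 1) := by
        refine PC_mem D Aop hA hS (j + 1) (i := i) (by omega) ?_
        rw [show i + (j + 1) = m + 1 by omega]
        exact hξ
      have hR := lemmaR D Aop (hT j (by omega)) (hT (j+1) (by omega)) hv
        (domPow_mono D Aop (by omega) hη)
      -- A (S i ξ) = S i (A ξ) + S (i+1) ξ
      have hpc := (PC_step D Aop hA hS (i := i) (by omega)
        (domPow_mono D Aop (by omega) hξ)).2
      have hTj : (⟪T j (S i ξ), A η⟫ : ℂ) =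
          ⟪T (j+1) (S i ξ), η⟫ + ⟪T j (S i (A ξ)), η⟫ + ⟪T j (S (i+1) ξ), η⟫ := by
        rw [hR, hpc, map_add, inner_add_left]
        ring
      rw [hTj]
      rw [show m + 1 - (j + 1) = i from by omega, show m + 1 - j = i + 1 from by omega]
      ring
    rw [Finset.sum_congr rfl term]
    -- Pascal recombination
    have hp := pascal_sum_pos (fun j => (⟪T j (S (m + 1 - j) ξ), η⟫ : ℂ)) m
    have e2 : ∀ j ∈ Finset.range (m + 1),
        (m.choose j : ℂ) * (⟪T (j+1) (S (m + 1 - (j+1)) ξ), η⟫ + ⟪T j (S (m + 1 - j) ξ), η⟫) =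
          (m.choose j : ℂ) * ⟪T j (S (m + 1 - j) ξ), η⟫ +
            (m.choose j : ℂ) * ⟪T (j+1) (S (m + 1 - (j+1)) ξ), η⟫ := fun j _ => by ring
    rw [Finset.sum_congr rfl e2, Finset.sum_add_distrib, ← hp]

end Product

/-- `C_n(A)` is a *-subalgebra of `B(ℋ)`: it is a linear subspace and is
closed under adjoints and products. -/
theorem stmt_14 {ℋ : Type*} [NormedAddCommGroup ℋ] [InnerProductSpace ℂ ℋ] [CompleteSpace ℋ]
    (D : Submodule ℂ ℋ) (Aop : ↥D →ₗ[ℂ] ℋ) (hA : IsSelfAdjointOp D Aop) (n : ℕ) :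
    (∀ X Y : ℋ →L[ℂ] ℋ, InCn D Aop n X → InCn D Aop n Y → InCn D Aop n (X + Y)) ∧
      (∀ (c : ℂ) (X : ℋ →L[ℂ] ℋ), InCn D Aop n X → InCn D Aop n (c • X)) ∧
      (∀ X : ℋ →L[ℂ] ℋ, InCn D Aop n X → InCn D Aop n (ContinuousLinearMap.adjoint X)) ∧
      ∀ X Y : ℋ →L[ℂ] ℋ, InCn D Aop n X → InCn D Aop n Y → InCn D Aop n (X.comp Y) := by
  refine ⟨?_, ?_, ?_, ?_⟩
  · -- addition
    intro X Y hX hY k hk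
    obtain ⟨Zx, hZx⟩ := hX k hk
    obtain ⟨Zy, hZy⟩ := hY k hk
    refine ⟨Zx + Zy, fun ξ hξ η hη => ?_⟩
    rw [commForm_add_left, hZx ξ hξ η hη, hZy ξ hξ η hη,
      ContinuousLinearMap.add_apply, inner_add_left]
  · -- scalar multiplication
    intro c X hX k hk
    obtain ⟨Zx, hZx⟩ := hX k hk
    refine ⟨c • Zx, fun ξ hξ η hη => ?_⟩
    rw [commForm_smul_left, hZx ξ hξ η hη, ContinuousLinearMap.smul_apply, inner_smul_left]
  · -- adjoint
    intro X hX k hk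
    obtain ⟨Zx, hZx⟩ := hX k hk
    exact ⟨((-1 : ℂ) ^ k) • ContinuousLinearMap.adjoint Zx, adj_rep D Aop hZx⟩
  · -- product
    intro X Y hX hY
    classical
    set T : ℕ → ℋ →L[ℂ] ℋ := fun k => if h : k ≤ n then (hX k h).choose else 0 with hTdef
    set S : ℕ → ℋ →L[ℂ] ℋ := fun k => if h : k ≤ n then (hY k h).choose else 0 with hSdef
    have hT : ∀ k ≤ n, AdExistsN D Aop k X (T k) := by
      intro k hk
      rw [hTdef]
      simp only [dif_pos hk]
      exact (hX k hk).choose_spec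
    have hS : ∀ k ≤ n, AdExistsN D Aop k Y (S k) := by
      intro k hk
      rw [hSdef]
      simp only [dif_pos hk]
      exact (hY k hk).choose_spec
    intro k hk
    exact ⟨Wprod T S k, prod_rep D Aop hA hT hS k hk⟩
end

section
/- Let A be a self-adjoint operator in ℋ, p ∈ ℕ, and B ∈ C_{p−1}(A) with B = B*; then A + B, with domain Dom(A), is self-adjoint. Then C_k(A) = C_k(A+B) for every k = 0, 1, …, p. -/
open scoped ComplexOrder
open Classical

variable {ℋ : Type*} [NormedAddCommGroup ℋ] [InnerProductSpace ℂ ℋ] [CompleteSpace ℋ]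

set_option linter.unusedSectionVars false
namespace Stmt16

open Filter Topology

variable {ℋ : Type*} [NormedAddCommGroup ℋ] [InnerProductSpace ℂ ℋ] [CompleteSpace ℋ]

local notation "⟪" x ", " y "⟫" => (inner ℂ x y : ℂ)

variable (D : Submodule ℂ ℋ) (Aop : ↥D →ₗ[ℂ] ℋ)

lemma dense_orth (hD : Dense (D : Set ℋ)) {z : ℋ}
    (hz : ∀ u : D, ⟪(u : ℋ), z⟫ = 0) : z = 0 := by
  have hall : ∀ x : ℋ, ⟪x, z⟫ = 0 := by
    intro x
    have hcl : closure (D : Set ℋ) = Set.univ := hD.closure_eq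
    have heq : Set.EqOn (fun x : ℋ => ⟪x, z⟫) (fun _ => (0 : ℂ))
        (closure (D : Set ℋ)) := by
      refine Set.EqOn.closure ?_ (continuous_id.inner continuous_const) continuous_const
      intro x hx
      exact hz ⟨x, hx⟩
    exact heq (by rw [hcl]; trivial)
  exact inner_self_eq_zero.mp (hall z)

lemma mem_and_eq (hA : IsSelfAdjointOp D Aop) {v w : ℋ}
    (h : ∀ u : D, ⟪Aop u, v⟫ = ⟪(u : ℋ), w⟫) : ∃ hv : v ∈ D, Aop ⟨v, hv⟩ = w := by
  obtain ⟨hD, hsym, hmax⟩ := hA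
  have hv : v ∈ D := hmax v w h
  refine ⟨hv, ?_⟩
  have hz : ∀ u : D, ⟪(u : ℋ), Aop ⟨v, hv⟩ - w⟫ = 0 := by
    intro u
    rw [inner_sub_right, ← hsym u ⟨v, hv⟩, h u, sub_self]
  have := dense_orth D hD hz
  exact sub_eq_zero.mp this

lemma closed_graph (hA : IsSelfAdjointOp D Aop) {u : ℕ → D} {v w : ℋ}
    (hu : Tendsto (fun n => (u n : ℋ)) atTop (𝓝 v))
    (hAu : Tendsto (fun n => Aop (u n)) atTop (𝓝 w)) :
    ∃ hv : v ∈ D, Aop ⟨v, hv⟩ = w := by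
  apply mem_and_eq D Aop hA
  intro x
  have h1 : Tendsto (fun n => ⟪Aop x, (u n : ℋ)⟫) atTop (𝓝 ⟪Aop x, v⟫) :=
    tendsto_const_nhds.inner hu
  have h2 : Tendsto (fun n => ⟪(x : ℋ), Aop (u n)⟫) atTop (𝓝 ⟪(x : ℋ), w⟫) :=
    tendsto_const_nhds.inner hAu
  have heq : (fun n => ⟪Aop x, (u n : ℋ)⟫) = fun n => ⟪(x : ℋ), Aop (u n)⟫ :=
    funext fun n => hA.2.1 x (u n)
  rw [heq] at h1
  exact tendsto_nhds_unique h1 h2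


/-- The shifted operator `A + i c`. -/
noncomputable def Top (c : ℝ) : ↥D →ₗ[ℂ] ℋ :=
  Aop + ((c : ℂ) * Complex.I) • D.subtype

lemma Top_apply (c : ℝ) (u : D) :
    Top D Aop c u = Aop u + ((c : ℂ) * Complex.I) • (u : ℋ) := rfl

lemma inner_A_self_real (hsym : ∀ u v : ↥D, ⟪Aop u, (v : ℋ)⟫ = ⟪(u : ℋ), Aop v⟫)
    (u : D) : (starRingEnd ℂ) ⟪Aop u, (u : ℋ)⟫ = ⟪Aop u, (u : ℋ)⟫ := by
  rw [inner_conj_symm, ← hsym u u]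

lemma norm_Top_sq (hsym : ∀ u v : ↥D, ⟪Aop u, (v : ℋ)⟫ = ⟪(u : ℋ), Aop v⟫)
    (c : ℝ) (u : D) :
    ‖Top D Aop c u‖ ^ 2 = ‖Aop u‖ ^ 2 + c ^ 2 * ‖(u : ℋ)‖ ^ 2 := by
  have hre : (⟪Aop u, ((c : ℂ) * Complex.I) • (u : ℋ)⟫).re = 0 := by
    rw [inner_smul_right]
    have hc := inner_A_self_real D Aop hsym u
    set z := ⟪Aop u, (u : ℋ)⟫ with hz
    have him : z.im = 0 := by
      have := congrArg Complex.im hc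
      have h2 : -z.im = z.im := by simpa [Complex.conj_im] using this
      linarith
    simp [Complex.mul_re, Complex.mul_im, him]
  have := @norm_add_sq ℂ _ _ _ _ (Aop u) (((c : ℂ) * Complex.I) • (u : ℋ))
  rw [Top_apply, this]
  have hre' : RCLike.re ⟪Aop u, ((c : ℂ) * Complex.I) • (u : ℋ)⟫ = 0 := hre
  rw [hre']
  have : ‖((c : ℂ) * Complex.I) • (u : ℋ)‖ = |c| * ‖(u : ℋ)‖ := by
    rw [norm_smul]
    simp [Complex.norm_exp]
  rw [this]
  ring_nf
  rw [sq_abs]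
  ring

lemma norm_le_Top (hsym : ∀ u v : ↥D, ⟪Aop u, (v : ℋ)⟫ = ⟪(u : ℋ), Aop v⟫)
    {c : ℝ} (hc : 0 < c) (u : D) :
    c * ‖(u : ℋ)‖ ≤ ‖Top D Aop c u‖ ∧ ‖Aop u‖ ≤ ‖Top D Aop c u‖ := by
  have h := norm_Top_sq D Aop hsym c u
  constructor
  · have h1 : (c * ‖(u : ℋ)‖) ^ 2 ≤ ‖Top D Aop c u‖ ^ 2 := by
      rw [h]; nlinarith [sq_nonneg ‖Aop u‖]
    exact (abs_le_of_sq_le_sq' h1 (norm_nonneg _)).2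
  · have h1 : ‖Aop u‖ ^ 2 ≤ ‖Top D Aop c u‖ ^ 2 := by
      rw [h]; nlinarith [norm_nonneg (u : ℋ), sq_nonneg (c * ‖(u:ℋ)‖)]
    exact (abs_le_of_sq_le_sq' h1 (norm_nonneg _)).2

lemma Top_inj (hsym : ∀ u v : ↥D, ⟪Aop u, (v : ℋ)⟫ = ⟪(u : ℋ), Aop v⟫)
    {c : ℝ} (hc : 0 < c) {u u' : D} (h : Top D Aop c u = Top D Aop c u') : u = u' := by
  have h0 : Top D Aop c (u - u') = 0 := by rw [map_sub, h, sub_self]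
  have := (norm_le_Top D Aop hsym hc (u - u')).1
  rw [h0] at this
  simp only [norm_zero] at this
  have hn : ‖((u - u' : D) : ℋ)‖ = 0 := by nlinarith [norm_nonneg ((u - u' : D) : ℋ)]
  have : ((u - u' : D) : ℋ) = 0 := norm_eq_zero.mp hn
  have : (u - u' : D) = 0 := Subtype.ext (by simpa using this)
  exact sub_eq_zero.mp this

lemma Top_surj (hA : IsSelfAdjointOp D Aop) {c : ℝ} (hc : 0 < c) :
    Function.Surjective (Top D Aop c) := by
  obtain ⟨hD, hsym, hmax⟩ := hA
  rw [← LinearMap.range_eq_top]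
  set K := LinearMap.range (Top D Aop c) with hK
  -- K is closed
  have hKc : IsClosed (K : Set ℋ) := by
    apply IsSeqClosed.isClosed
    intro x y hx hxy
    choose u hu using hx
    have hcx : CauchySeq x := hxy.cauchySeq
    have hcu : CauchySeq (fun n => (u n : ℋ)) := by
      rw [Metric.cauchySeq_iff] at hcx ⊢
      intro ε hε
      obtain ⟨N, hN⟩ := hcx (c * ε) (by positivity)
      refine ⟨N, fun m hm n hn => ?_⟩
      have h1 := hN m hm n hn
      have h2 := (norm_le_Top D Aop hsym hc (u m - u n)).1
      rw [map_sub, hu m, hu n] at h2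
      rw [dist_eq_norm] at h1 ⊢
      have : ‖(↑(u m - u n) : ℋ)‖ = ‖(u m : ℋ) - (u n : ℋ)‖ := by norm_cast
      rw [this] at h2
      nlinarith
    have hcAu : CauchySeq (fun n => Aop (u n)) := by
      rw [Metric.cauchySeq_iff] at hcx ⊢
      intro ε hε
      obtain ⟨N, hN⟩ := hcx ε hε
      refine ⟨N, fun m hm n hn => ?_⟩
      have h1 := hN m hm n hn
      have h2 := (norm_le_Top D Aop hsym hc (u m - u n)).2
      have h3 : Top D Aop c (u m - u n) = x m - x n := by
        rw [map_sub, hu m, hu n]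
      rw [h3, map_sub] at h2
      rw [dist_eq_norm] at h1 ⊢
      exact lt_of_le_of_lt h2 h1
    obtain ⟨v, hv⟩ := cauchySeq_tendsto_of_complete hcu
    obtain ⟨w, hw⟩ := cauchySeq_tendsto_of_complete hcAu
    obtain ⟨hvD, hvw⟩ := closed_graph D Aop ⟨hD, hsym, hmax⟩ hv hw
    refine ⟨⟨v, hvD⟩, ?_⟩
    have hlim : Tendsto (fun n => Top D Aop c (u n)) atTop
        (𝓝 (w + ((c : ℂ) * Complex.I) • v)) := by
      simp only [Top_apply]
      exact hw.add (hv.const_smul _)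
    have hlim' : Tendsto (fun n => Top D Aop c (u n)) atTop (𝓝 y) := by
      simpa only [hu] using hxy
    rw [Top_apply, hvw]
    exact tendsto_nhds_unique hlim hlim'
  -- orthogonal complement of K is trivial
  haveI : CompleteSpace K := hKc.completeSpace_coe
  have horth : Kᗮ = ⊥ := by
    rw [Submodule.eq_bot_iff]
    intro z hz
    have hz' : ∀ u : D, ⟪Top D Aop c u, z⟫ = 0 := fun u =>
      hz (Top D Aop c u) ⟨u, rfl⟩
    have hAz : ∀ u : D, ⟪Aop u, z⟫ = ⟪(u : ℋ), ((c : ℂ) * Complex.I) • z⟫ := by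
      intro u
      have := hz' u
      rw [Top_apply, inner_add_left, inner_smul_left] at this
      rw [inner_smul_right]
      have hconj : (starRingEnd ℂ) ((c : ℂ) * Complex.I) = -((c : ℂ) * Complex.I) := by
        simp [Complex.conj_I]
      rw [hconj] at this
      linear_combination this
    obtain ⟨hzD, hAz'⟩ := mem_and_eq D Aop ⟨hD, hsym, hmax⟩ hAz
    -- symmetry forces z = 0
    have h1 : ⟪Aop ⟨z, hzD⟩, z⟫ = -((c : ℂ) * Complex.I) * ⟪z, z⟫ := by
      rw [hAz', inner_smul_left]
      simp [Complex.conj_I]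
    have h2 : ⟪Aop ⟨z, hzD⟩, z⟫ = ((c : ℂ) * Complex.I) * ⟪z, z⟫ := by
      have := hsym ⟨z, hzD⟩ ⟨z, hzD⟩
      simp only at this
      rw [this, hAz', inner_smul_right]
    have h3 : (2 * ((c : ℂ) * Complex.I)) * ⟪z, z⟫ = 0 := by
      linear_combination h1 - h2
    have hc0 : (2 * ((c : ℂ) * Complex.I)) ≠ 0 := by
      simp [Complex.ext_iff, hc.ne']
    have := mul_eq_zero.mp h3
    rcases this with h | h
    · exact absurd h hc0
    · exact inner_self_eq_zero.mp h
  exact Submodule.orthogonal_eq_bot_iff.mp horth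

/-- The resolvent `(A + ic)⁻¹`. -/
noncomputable def Rv (c : ℝ) (y : ℋ) : D :=
  if h : ∃ u : D, Top D Aop c u = y then h.choose else 0

lemma Rv_spec (hA : IsSelfAdjointOp D Aop) {c : ℝ} (hc : 0 < c) (y : ℋ) :
    Top D Aop c (Rv D Aop c y) = y := by
  have h : ∃ u : D, Top D Aop c u = y := Top_surj D Aop hA hc y
  rw [Rv, dif_pos h]
  exact h.choose_spec

lemma Rv_unique (hA : IsSelfAdjointOp D Aop) {c : ℝ} (hc : 0 < c) {y : ℋ} {u : D}
    (h : Top D Aop c u = y) : Rv D Aop c y = u :=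
  Top_inj D Aop hA.2.1 hc (by rw [Rv_spec D Aop hA hc y, ← h])

/-- The regularizer `J = ic (A + ic)⁻¹`. -/
noncomputable def Jr (c : ℝ) (y : ℋ) : ℋ :=
  ((c : ℂ) * Complex.I) • ((Rv D Aop c y : ℋ))

lemma Jr_mem (c : ℝ) (y : ℋ) : Jr D Aop c y ∈ D := by
  exact D.smul_mem _ (Rv D Aop c y).2

lemma Rv_norm (hA : IsSelfAdjointOp D Aop) {c : ℝ} (hc : 0 < c) (y : ℋ) :
    c * ‖(Rv D Aop c y : ℋ)‖ ≤ ‖y‖ ∧ ‖Aop (Rv D Aop c y)‖ ≤ ‖y‖ := by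
  have h := norm_le_Top D Aop hA.2.1 hc (Rv D Aop c y)
  rw [Rv_spec D Aop hA hc y] at h
  exact h

lemma Jr_norm (hA : IsSelfAdjointOp D Aop) {c : ℝ} (hc : 0 < c) (y : ℋ) :
    ‖Jr D Aop c y‖ ≤ ‖y‖ := by
  have h := (Rv_norm D Aop hA hc y).1
  rw [Jr, norm_smul]
  have : ‖(c : ℂ) * Complex.I‖ = c := by
    simp [abs_of_pos hc]
  rw [this]
  exact h

lemma Rv_add (hA : IsSelfAdjointOp D Aop) {c : ℝ} (hc : 0 < c) (x y : ℋ) :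
    Rv D Aop c (x + y) = Rv D Aop c x + Rv D Aop c y := by
  apply Rv_unique D Aop hA hc
  rw [map_add, Rv_spec D Aop hA hc x, Rv_spec D Aop hA hc y]

lemma Jr_sub (hA : IsSelfAdjointOp D Aop) {c : ℝ} (hc : 0 < c) (x y : ℋ) :
    Jr D Aop c x - Jr D Aop c y = Jr D Aop c (x - y) := by
  have := Rv_add D Aop hA hc (x - y) y
  rw [sub_add_cancel] at this
  rw [Jr, Jr, Jr, this]
  push_cast
  rw [smul_add]
  abel

/-- `u - J u = R (A u)` for `u ∈ D`. -/
lemma Jr_sub_self (hA : IsSelfAdjointOp D Aop) {c : ℝ} (hc : 0 < c) (u : D) :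
    (u : ℋ) - Jr D Aop c u = ((Rv D Aop c (Aop u) : ℋ)) := by
  set r := Rv D Aop c ((u : ℋ)) with hr
  have hTr : Top D Aop c r = (u : ℋ) := Rv_spec D Aop hA hc _
  have hq : Top D Aop c (u - ((c : ℂ) * Complex.I) • r) = Aop u := by
    rw [map_sub, map_smul, hTr, Top_apply]
    exact add_sub_cancel_right _ _
  have h2 := Rv_unique D Aop hA hc hq
  rw [Jr, ← hr, h2]
  push_cast
  ring_nf

lemma Jr_comm (hA : IsSelfAdjointOp D Aop) {c : ℝ} (hc : 0 < c) (u : D) :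
    Aop ⟨Jr D Aop c u, Jr_mem D Aop c u⟩ = Jr D Aop c (Aop u) := by
  have h1 : (⟨Jr D Aop c u, Jr_mem D Aop c u⟩ : D)
      = ((c : ℂ) * Complex.I) • Rv D Aop c u := by
    apply Subtype.ext; simp [Jr]
  rw [h1, map_smul]
  have h2 := Rv_spec D Aop hA hc ((u : ℋ))
  rw [Top_apply] at h2
  have h3 : Aop (Rv D Aop c ((u : ℋ)))
      = (u : ℋ) - ((c : ℂ) * Complex.I) • ((Rv D Aop c ((u : ℋ))) : ℋ) :=
    eq_sub_of_add_eq h2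
  rw [h3, Jr, ← Jr_sub_self D Aop hA hc u, Jr]

lemma Jr_tendsto (hA : IsSelfAdjointOp D Aop) (y : ℋ) :
    Tendsto (fun m : ℕ => Jr D Aop (m + 1) y) atTop (𝓝 y) := by
  rw [Metric.tendsto_atTop]
  intro ε hε
  obtain ⟨u, hu, hdist⟩ := hA.1.exists_dist_lt y (show (0:ℝ) < ε/3 by linarith)
  obtain ⟨M, hM⟩ := exists_nat_gt (3 * ‖Aop ⟨u, hu⟩‖ / ε)
  refine ⟨M, fun m hm => ?_⟩
  set c : ℝ := (m : ℝ) + 1 with hcdef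
  have hc : (0 : ℝ) < c := by positivity
  have h1 : ‖Jr D Aop c y - Jr D Aop c u‖ ≤ ‖y - u‖ := by
    rw [Jr_sub D Aop hA hc]
    exact Jr_norm D Aop hA hc _
  have h2 : ‖Jr D Aop c u - u‖ ≤ ‖Aop ⟨u, hu⟩‖ / c := by
    have hss := Jr_sub_self D Aop hA hc ⟨u, hu⟩
    rw [norm_sub_rev]
    simp only [Submodule.coe_mk] at hss
    rw [hss]
    have h3 := (Rv_norm D Aop hA hc (Aop ⟨u, hu⟩)).1
    rw [le_div_iff₀ hc]
    calc ‖(↑(Rv D Aop c (Aop ⟨u, hu⟩)) : ℋ)‖ * c = c * ‖(↑(Rv D Aop c (Aop ⟨u, hu⟩)) : ℋ)‖ := by ring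
    _ ≤ ‖Aop ⟨u, hu⟩‖ := h3
  have hAu : ‖Aop ⟨u, hu⟩‖ / c < ε/3 := by
    rw [div_lt_iff₀ hc]
    have hb : (3 * ‖Aop ⟨u, hu⟩‖ / ε) < c := by
      have : (M:ℝ) ≤ (m:ℝ) := by exact_mod_cast hm
      have : (3 * ‖Aop ⟨u, hu⟩‖ / ε) < (m:ℝ) + 1 := by linarith
      simpa [hcdef] using this
    rw [div_lt_iff₀ (show (0:ℝ) < ε by linarith)] at hb
    nlinarith
  have hdy : ‖y - u‖ < ε/3 := by rwa [← dist_eq_norm]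
  have htri : dist (Jr D Aop c y) y ≤ ‖Jr D Aop c y - Jr D Aop c u‖
      + ‖Jr D Aop c u - u‖ + ‖u - y‖ := by
    rw [dist_eq_norm]
    have := norm_add₃_le (a := Jr D Aop c y - Jr D Aop c u)
      (b := Jr D Aop c u - u) (c := u - y)
    simpa using this
  have hdy' : ‖u - y‖ < ε/3 := by rwa [norm_sub_rev] at hdy
  have : dist (Jr D Aop c y) y < ε/3 + ε/3 + ε/3 := by
    calc dist (Jr D Aop c y) y ≤ _ := htri
    _ < ε/3 + ε/3 + ε/3 := by
        have := lt_of_le_of_lt h1 hdy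
        have := lt_of_le_of_lt h2 hAu
        linarith
  have hcast : Jr D Aop ((m:ℝ) + 1) y = Jr D Aop c y := by rw [hcdef]
  calc dist (Jr D Aop ((m:ℝ)+1) y) y = dist (Jr D Aop c y) y := by rw [hcast]
  _ < ε/3 + ε/3 + ε/3 := this
  _ = ε := by ring

lemma Jr_iter_norm (hA : IsSelfAdjointOp D Aop) {c : ℝ} (hc : 0 < c) (y : ℋ) (k : ℕ) :
    ‖(Jr D Aop c)^[k] y - y‖ ≤ k * ‖Jr D Aop c y - y‖ := by
  induction k with
  | zero => simp
  | succ k ih =>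
    rw [Function.iterate_succ_apply']
    have tri : ‖Jr D Aop c ((Jr D Aop c)^[k] y) - y‖
        ≤ ‖Jr D Aop c ((Jr D Aop c)^[k] y) - Jr D Aop c y‖ + ‖Jr D Aop c y - y‖ := by
      have := norm_add_le (Jr D Aop c ((Jr D Aop c)^[k] y) - Jr D Aop c y)
        (Jr D Aop c y - y)
      simpa using this
    have hJ : ‖Jr D Aop c ((Jr D Aop c)^[k] y) - Jr D Aop c y‖
        ≤ ‖(Jr D Aop c)^[k] y - y‖ := by
      rw [Jr_sub D Aop hA hc]
      exact Jr_norm D Aop hA hc _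
    push_cast
    calc ‖Jr D Aop c ((Jr D Aop c)^[k] y) - y‖ ≤ _ := tri
    _ ≤ ‖(Jr D Aop c)^[k] y - y‖ + ‖Jr D Aop c y - y‖ := by linarith
    _ ≤ (k : ℝ) * ‖Jr D Aop c y - y‖ + ‖Jr D Aop c y - y‖ := by linarith
    _ = ((k : ℝ) + 1) * ‖Jr D Aop c y - y‖ := by ring

lemma Jr_iter_tendsto (hA : IsSelfAdjointOp D Aop) (k : ℕ) (y : ℋ) :
    Tendsto (fun m : ℕ => (Jr D Aop (m + 1))^[k] y) atTop (𝓝 y) := by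
  rw [tendsto_iff_norm_sub_tendsto_zero]
  have hbound : ∀ m : ℕ, ‖(Jr D Aop ((m:ℝ) + 1))^[k] y - y‖
      ≤ k * ‖Jr D Aop ((m:ℝ) + 1) y - y‖ := fun m =>
    Jr_iter_norm D Aop hA (by positivity) y k
  have hJt : Tendsto (fun m : ℕ => ‖Jr D Aop ((m:ℝ) + 1) y - y‖) atTop (𝓝 0) := by
    have := (Jr_tendsto D Aop hA y)
    rwa [tendsto_iff_norm_sub_tendsto_zero] at this
  have hup : Tendsto (fun m : ℕ => (k:ℝ) * ‖Jr D Aop ((m:ℝ) + 1) y - y‖) atTop (𝓝 0) := by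
    simpa using hJt.const_mul (k:ℝ)
  exact squeeze_zero (fun m => norm_nonneg _) hbound hup

-- domPow basic lemmas

lemma domPow_mono {m n : ℕ} (h : m ≤ n) : domPow D Aop n ⊆ domPow D Aop m :=
  fun ψ hψ k hk => hψ k (lt_of_lt_of_le hk h)

lemma mem_D_of_domPow {ψ : ℋ} {k : ℕ} (h : ψ ∈ domPow D Aop (k + 1)) : ψ ∈ D := by
  have := h 0 (Nat.succ_pos k)
  simpa using this

lemma Aext_mem_domPow {ψ : ℋ} {k : ℕ} (h : ψ ∈ domPow D Aop (k + 1)) :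
    Aext D Aop ψ ∈ domPow D Aop k := fun j hj => by
  rw [← Function.iterate_succ_apply]
  exact h (j + 1) (Nat.succ_lt_succ hj)

lemma Aext_eq (ψ : ℋ) (h : ψ ∈ D) : Aext D Aop ψ = Aop ⟨ψ, h⟩ := dif_pos h

lemma mem_domPow_one {ψ : ℋ} (h : ψ ∈ D) : ψ ∈ domPow D Aop 1 := by
  intro k hk
  interval_cases k
  simpa using h

lemma Aext_Jr (hA : IsSelfAdjointOp D Aop) {c : ℝ} (hc : 0 < c) {ψ : ℋ} (h : ψ ∈ D) :
    Aext D Aop (Jr D Aop c ψ) = Jr D Aop c (Aext D Aop ψ) := by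
  rw [Aext_eq D Aop _ (Jr_mem D Aop c ψ), Aext_eq D Aop ψ h]
  exact Jr_comm D Aop hA hc ⟨ψ, h⟩

lemma Aext_iter_Jr (hA : IsSelfAdjointOp D Aop) {c : ℝ} (hc : 0 < c) :
    ∀ (j : ℕ) (ψ : ℋ), ψ ∈ domPow D Aop j →
    (Aext D Aop)^[j] (Jr D Aop c ψ) = Jr D Aop c ((Aext D Aop)^[j] ψ) := by
  intro j
  induction j with
  | zero => intro ψ _; simp
  | succ j ih =>
    intro ψ hψ
    rw [Function.iterate_succ_apply, Function.iterate_succ_apply,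
      Aext_Jr D Aop hA hc (mem_D_of_domPow D Aop hψ)]
    exact ih (Aext D Aop ψ) (Aext_mem_domPow D Aop hψ)

lemma Jr_mem_domPow (hA : IsSelfAdjointOp D Aop) {c : ℝ} (hc : 0 < c) {k : ℕ} {ψ : ℋ}
    (h : ψ ∈ domPow D Aop k) : Jr D Aop c ψ ∈ domPow D Aop (k + 1) := by
  intro j hj
  have hjk : j ≤ k := Nat.lt_succ_iff.mp hj
  rw [Aext_iter_Jr D Aop hA hc j ψ (domPow_mono D Aop hjk h)]
  exact Jr_mem D Aop c _

lemma Jr_iter_spec (hA : IsSelfAdjointOp D Aop) {c : ℝ} (hc : 0 < c) (k : ℕ) (u : D) :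
    (Jr D Aop c)^[k] (u : ℋ) ∈ domPow D Aop (k + 1) ∧
    Aext D Aop ((Jr D Aop c)^[k] (u : ℋ)) = (Jr D Aop c)^[k] (Aop u) := by
  induction k with
  | zero =>
    refine ⟨mem_domPow_one D Aop u.2, ?_⟩
    simp [Aext_eq D Aop (u : ℋ) u.2]
  | succ k ih =>
    obtain ⟨hm, he⟩ := ih
    constructor
    · rw [Function.iterate_succ_apply']
      exact Jr_mem_domPow D Aop hA hc hm
    · rw [Function.iterate_succ_apply', Function.iterate_succ_apply' (f := Jr D Aop c) (n := k) (x := Aop u)]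
      have hD : (Jr D Aop c)^[k] (u : ℋ) ∈ D :=
        mem_D_of_domPow D Aop hm
      rw [Aext_Jr D Aop hA hc hD, he]

/-- `X` maps `D` to `D` and `A X = X A + Y` on `D`. -/
def Commutes (X Y : ℋ →L[ℂ] ℋ) : Prop :=
  ∀ ξ : D, ∃ h : X (ξ : ℋ) ∈ D, Aop ⟨X (ξ : ℋ), h⟩ = X (Aop ξ) + Y (ξ : ℋ)

/-- The one-step commutator form of `X` is represented by `Y` on `D`. -/
def HasStep (X Y : ℋ →L[ℂ] ℋ) : Prop :=
  ∀ ξ η : D, ⟪X (ξ : ℋ), Aop η⟫ - ⟪X (Aop ξ), (η : ℋ)⟫ = ⟪Y (ξ : ℋ), (η : ℋ)⟫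

lemma Commutes.hasStep (hsym : ∀ u v : ↥D, ⟪Aop u, (v : ℋ)⟫ = ⟪(u : ℋ), Aop v⟫)
    {X Y : ℋ →L[ℂ] ℋ} (h : Commutes D Aop X Y) : HasStep D Aop X Y := by
  intro ξ η
  obtain ⟨hm, he⟩ := h ξ
  have h1 : ⟪X (ξ : ℋ), Aop η⟫ = ⟪Aop ⟨X (ξ : ℋ), hm⟩, (η : ℋ)⟫ := by
    rw [hsym ⟨X (ξ : ℋ), hm⟩ η]
  rw [h1, he, inner_add_left]
  ring

lemma HasStep.commutes (hA : IsSelfAdjointOp D Aop)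
    {X Y : ℋ →L[ℂ] ℋ} (h : HasStep D Aop X Y) : Commutes D Aop X Y := by
  intro ξ
  have hkey : ∀ u : D, ⟪Aop u, X (ξ : ℋ)⟫ = ⟪(u : ℋ), X (Aop ξ) + Y (ξ : ℋ)⟫ := by
    intro u
    have h1 := h ξ u
    have h2 : ⟪X (ξ : ℋ), Aop u⟫ = ⟪X (Aop ξ) + Y (ξ : ℋ), (u : ℋ)⟫ := by
      rw [inner_add_left]; linear_combination h1
    have h3 := congrArg (starRingEnd ℂ) h2
    rwa [inner_conj_symm, inner_conj_symm] at h3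
  exact mem_and_eq D Aop hA hkey

lemma step_extend (hA : IsSelfAdjointOp D Aop) (k : ℕ) {Z W : ℋ →L[ℂ] ℋ}
    (h : ∀ ξ ∈ domPow D Aop (k + 1), ∀ η ∈ domPow D Aop (k + 1),
      ⟪Z ξ, Aext D Aop η⟫ - ⟪Z (Aext D Aop ξ), η⟫ = ⟪W ξ, η⟫) :
    HasStep D Aop Z W := by
  intro ξ η
  set f : ℕ → ℋ := fun m => (Jr D Aop (m + 1))^[k] (ξ : ℋ) with hf
  set g : ℕ → ℋ := fun m => (Jr D Aop (m + 1))^[k] (η : ℋ) with hg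
  have hc : ∀ m : ℕ, (0 : ℝ) < (m : ℝ) + 1 := fun m => by positivity
  have hfs := fun m => Jr_iter_spec D Aop hA (hc m) k ξ
  have hgs := fun m => Jr_iter_spec D Aop hA (hc m) k η
  have heq : ∀ m : ℕ, ⟪Z (f m), (Jr D Aop ((m:ℝ) + 1))^[k] (Aop η)⟫
      - ⟪Z ((Jr D Aop ((m:ℝ) + 1))^[k] (Aop ξ)), g m⟫ = ⟪W (f m), g m⟫ := by
    intro m
    have := h (f m) (hfs m).1 (g m) (hgs m).1
    rwa [(hfs m).2, (hgs m).2] at this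
  -- limits
  have hft : Tendsto f atTop (𝓝 (ξ : ℋ)) := Jr_iter_tendsto D Aop hA k _
  have hgt : Tendsto g atTop (𝓝 (η : ℋ)) := Jr_iter_tendsto D Aop hA k _
  have hfAt : Tendsto (fun m : ℕ => (Jr D Aop ((m:ℝ) + 1))^[k] (Aop ξ)) atTop
      (𝓝 (Aop ξ)) := Jr_iter_tendsto D Aop hA k _
  have hgAt : Tendsto (fun m : ℕ => (Jr D Aop ((m:ℝ) + 1))^[k] (Aop η)) atTop
      (𝓝 (Aop η)) := Jr_iter_tendsto D Aop hA k _
  have hZf : Tendsto (fun m : ℕ => Z (f m)) atTop (𝓝 (Z (ξ : ℋ))) :=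
    (Z.continuous.tendsto _).comp hft
  have hZAf : Tendsto (fun m : ℕ => Z ((Jr D Aop ((m:ℝ) + 1))^[k] (Aop ξ))) atTop
      (𝓝 (Z (Aop ξ))) := (Z.continuous.tendsto _).comp hfAt
  have hWf : Tendsto (fun m : ℕ => W (f m)) atTop (𝓝 (W (ξ : ℋ))) :=
    (W.continuous.tendsto _).comp hft
  have hL : Tendsto (fun m : ℕ => ⟪Z (f m), (Jr D Aop ((m:ℝ) + 1))^[k] (Aop η)⟫
      - ⟪Z ((Jr D Aop ((m:ℝ) + 1))^[k] (Aop ξ)), g m⟫) atTop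
      (𝓝 (⟪Z (ξ : ℋ), Aop η⟫ - ⟪Z (Aop ξ), (η : ℋ)⟫)) :=
    (hZf.inner hgAt).sub (hZAf.inner hgt)
  have hR : Tendsto (fun m : ℕ => ⟪W (f m), g m⟫) atTop (𝓝 ⟪W (ξ : ℋ), (η : ℋ)⟫) :=
    hWf.inner hgt
  have hL' : Tendsto (fun m : ℕ => ⟪Z (f m), (Jr D Aop ((m:ℝ) + 1))^[k] (Aop η)⟫
      - ⟪Z ((Jr D Aop ((m:ℝ) + 1))^[k] (Aop ξ)), g m⟫) atTop
      (𝓝 ⟪W (ξ : ℋ), (η : ℋ)⟫) := by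
    have : (fun m : ℕ => ⟪Z (f m), (Jr D Aop ((m:ℝ) + 1))^[k] (Aop η)⟫
        - ⟪Z ((Jr D Aop ((m:ℝ) + 1))^[k] (Aop ξ)), g m⟫)
        = fun m : ℕ => ⟪W (f m), g m⟫ := funext fun m => heq m
    rw [this]
    exact hR
  exact tendsto_nhds_unique hL hL'

lemma binom_rec {M : Type*} [AddCommMonoid M] (g : ℕ → M) (n : ℕ) :
    ∑ k ∈ Finset.range (n + 2), (n + 1).choose k • g k
      = (∑ k ∈ Finset.range (n + 1), n.choose k • g k)
        + ∑ k ∈ Finset.range (n + 1), n.choose k • g (k + 1) := by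
  have h1 := Finset.sum_range_succ' (fun k => (n + 1).choose k • g k) (n + 1)
  have h2 := Finset.sum_range_succ' (fun k => n.choose k • g k) (n + 1)
  simp only [Nat.choose_zero_right, one_smul] at h1 h2
  rw [h1]
  have h3 : ∀ i, (n + 1).choose (i + 1) • g (i + 1)
      = n.choose i • g (i + 1) + n.choose (i + 1) • g (i + 1) := by
    intro i; rw [Nat.choose_succ_succ, add_smul]
  rw [Finset.sum_congr rfl (fun i _ => h3 i), Finset.sum_add_distrib]
  have h4 : (∑ i ∈ Finset.range (n + 1), n.choose (i + 1) • g (i + 1)) + g 0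
      = ∑ k ∈ Finset.range (n + 1), n.choose k • g k := by
    rw [← h2, Finset.sum_range_succ]
    simp [Nat.choose_succ_self]
  calc (∑ i ∈ Finset.range (n + 1), n.choose i • g (i + 1)
        + ∑ i ∈ Finset.range (n + 1), n.choose (i + 1) • g (i + 1)) + g 0
      = (∑ i ∈ Finset.range (n + 1), n.choose (i + 1) • g (i + 1) + g 0)
        + ∑ i ∈ Finset.range (n + 1), n.choose i • g (i + 1) := by abel
  _ = (∑ k ∈ Finset.range (n + 1), n.choose k • g k)
        + ∑ i ∈ Finset.range (n + 1), n.choose i • g (i + 1) := by rw [h4]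

lemma commForm_rec (X : ℋ →L[ℂ] ℋ) (n : ℕ) (ξ η : ℋ) :
    commForm D Aop X (n + 1) ξ η
      = commForm D Aop X n ξ (Aext D Aop η) - commForm D Aop X n (Aext D Aop ξ) η := by
  set g : ℕ → ℂ := fun k =>
    (-1) ^ k * ⟪X ((Aext D Aop)^[k] ξ), (Aext D Aop)^[n + 1 - k] η⟫ with hg
  have hLHS : commForm D Aop X (n + 1) ξ η
      = ∑ k ∈ Finset.range (n + 2), (n + 1).choose k • g k := by
    unfold commForm
    refine Finset.sum_congr rfl fun k hk => ?_
    rw [hg, nsmul_eq_mul]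
    ring
  have hR1 : commForm D Aop X n ξ (Aext D Aop η)
      = ∑ k ∈ Finset.range (n + 1), n.choose k • g k := by
    unfold commForm
    refine Finset.sum_congr rfl fun k hk => ?_
    have hkn : k ≤ n := Nat.lt_succ_iff.mp (Finset.mem_range.mp hk)
    rw [hg, nsmul_eq_mul]
    have hit : (Aext D Aop)^[n - k] (Aext D Aop η) = (Aext D Aop)^[n + 1 - k] η := by
      rw [← Function.iterate_succ_apply]
      congr 1
      omega
    rw [hit]
    ring
  have hR2 : commForm D Aop X n (Aext D Aop ξ) η
      = -∑ k ∈ Finset.range (n + 1), n.choose k • g (k + 1) := by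
    unfold commForm
    rw [← Finset.sum_neg_distrib]
    refine Finset.sum_congr rfl fun k hk => ?_
    have hkn : k ≤ n := Nat.lt_succ_iff.mp (Finset.mem_range.mp hk)
    rw [hg, nsmul_eq_mul]
    have hit : (Aext D Aop)^[k] (Aext D Aop ξ) = (Aext D Aop)^[k + 1] ξ := by
      rw [← Function.iterate_succ_apply]
    have hsub : n + 1 - (k + 1) = n - k := by omega
    rw [hit]
    show _ = -((n.choose k : ℂ) *
      ((-1) ^ (k + 1) * ⟪X ((Aext D Aop)^[k + 1] ξ), (Aext D Aop)^[n + 1 - (k + 1)] η⟫))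
    rw [hsub]
    ring
  rw [hLHS, hR1, hR2, binom_rec g n]
  ring

lemma adExists_zero (X : ℋ →L[ℂ] ℋ) : AdExistsN D Aop 0 X X := by
  intro ξ _ η _
  simp [commForm]

/-- A chain of iterated commutators starting at `X`. -/
def ChainN (n : ℕ) (X : ℋ →L[ℂ] ℋ) : Prop :=
  ∃ Y : ℕ → ℋ →L[ℂ] ℋ, Y 0 = X ∧ ∀ j < n, Commutes D Aop (Y j) (Y (j + 1))

lemma chain_adExists (hA : IsSelfAdjointOp D Aop) {n : ℕ} {X : ℋ →L[ℂ] ℋ}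
    {Y : ℕ → ℋ →L[ℂ] ℋ} (hY0 : Y 0 = X)
    (hch : ∀ j < n, Commutes D Aop (Y j) (Y (j + 1))) :
    ∀ k, k ≤ n → AdExistsN D Aop k X (Y k) := by
  intro k
  induction k with
  | zero => intro _; rw [hY0]; exact adExists_zero D Aop X
  | succ k ih =>
    intro hk
    have hkn : k ≤ n := Nat.le_of_succ_le hk
    have hIH := ih hkn
    intro ξ hξ η hη
    rw [commForm_rec]
    have h1 := hIH ξ (domPow_mono D Aop (Nat.le_succ k) hξ)
      (Aext D Aop η) (Aext_mem_domPow D Aop hη)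
    have h2 := hIH (Aext D Aop ξ) (Aext_mem_domPow D Aop hξ)
      η (domPow_mono D Aop (Nat.le_succ k) hη)
    rw [h1, h2]
    have hξD : ξ ∈ D := mem_D_of_domPow D Aop hξ
    have hηD : η ∈ D := mem_D_of_domPow D Aop hη
    have hst := ((hch k (Nat.lt_of_succ_le hk)).hasStep D Aop hA.2.1) ⟨ξ, hξD⟩ ⟨η, hηD⟩
    rw [Aext_eq D Aop η hηD, Aext_eq D Aop ξ hξD]
    exact hst

lemma chainN_inCn (hA : IsSelfAdjointOp D Aop) {n : ℕ} {X : ℋ →L[ℂ] ℋ}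
    (h : ChainN D Aop n X) : InCn D Aop n X := by
  obtain ⟨Y, hY0, hch⟩ := h
  exact fun k hk => ⟨Y k, chain_adExists D Aop hA hY0 hch k hk⟩

lemma inCn_chainN (hA : IsSelfAdjointOp D Aop) {n : ℕ} {X : ℋ →L[ℂ] ℋ}
    (h : InCn D Aop n X) : ChainN D Aop n X := by
  choose Z hZ using h
  have hZ0 : Z 0 (Nat.zero_le n) = X := by
    have h0 := hZ 0 (Nat.zero_le n)
    ext ψ
    apply ext_inner_right ℂ
    intro v
    have := h0 ψ (by intro k hk; omega) v (by intro k hk; omega)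
    simp only [commForm, Finset.sum_range_one] at this
    simpa using this.symm
  refine ⟨fun k => if hk : k ≤ n then Z k hk else 0,
    by simp only [dif_pos (Nat.zero_le n)]; exact hZ0, ?_⟩
  intro j hj
  have hj1 : j + 1 ≤ n := Nat.succ_le_of_lt hj
  have hjn : j ≤ n := Nat.le_of_lt hj
  simp only [dif_pos hj1, dif_pos hjn]
  have hrel : ∀ ξ ∈ domPow D Aop (j + 1), ∀ η ∈ domPow D Aop (j + 1),
      ⟪(Z j hjn) ξ, Aext D Aop η⟫ - ⟪(Z j hjn) (Aext D Aop ξ), η⟫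
        = ⟪(Z (j + 1) hj1) ξ, η⟫ := by
    intro ξ hξ η hη
    have e1 := hZ (j + 1) hj1 ξ hξ η hη
    rw [commForm_rec] at e1
    rw [hZ j hjn ξ (domPow_mono D Aop (Nat.le_succ j) hξ)
        (Aext D Aop η) (Aext_mem_domPow D Aop hη),
      hZ j hjn (Aext D Aop ξ) (Aext_mem_domPow D Aop hξ)
        η (domPow_mono D Aop (Nat.le_succ j) hη)] at e1
    exact e1
  have hstep : HasStep D Aop (Z j hjn) (Z (j + 1) hj1) :=
    step_extend D Aop hA j hrel
  exact hstep.commutes D Aop hA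

lemma Commutes.add' {X Y X' Y' : ℋ →L[ℂ] ℋ} (h : Commutes D Aop X Y)
    (h' : Commutes D Aop X' Y') : Commutes D Aop (X + X') (Y + Y') := by
  intro ξ
  obtain ⟨h1, e1⟩ := h ξ
  obtain ⟨h2, e2⟩ := h' ξ
  refine ⟨by simpa using D.add_mem h1 h2, ?_⟩
  have hsum : (⟨(X + X') (ξ : ℋ), by simpa using D.add_mem h1 h2⟩ : D)
      = ⟨X (ξ : ℋ), h1⟩ + ⟨X' (ξ : ℋ), h2⟩ := by
    apply Subtype.ext; simp
  rw [hsum, map_add, e1, e2]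
  simp
  abel

lemma Commutes.neg' {X Y : ℋ →L[ℂ] ℋ} (h : Commutes D Aop X Y) :
    Commutes D Aop (-X) (-Y) := by
  intro ξ
  obtain ⟨h1, e1⟩ := h ξ
  refine ⟨by simpa using D.neg_mem h1, ?_⟩
  have hneg : (⟨(-X) (ξ : ℋ), by simpa using D.neg_mem h1⟩ : D) = -⟨X (ξ : ℋ), h1⟩ := by
    apply Subtype.ext; simp
  rw [hneg, map_neg, e1]
  simp
  abel

lemma Commutes.zero' : Commutes D Aop (0 : ℋ →L[ℂ] ℋ) 0 := by
  intro ξ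
  refine ⟨by simp, ?_⟩
  have h0 : (⟨(0 : ℋ →L[ℂ] ℋ) (ξ : ℋ), by simp⟩ : D) = 0 := by
    apply Subtype.ext; simp
  rw [h0, map_zero]
  simp

lemma Commutes.comp' {X Y W V : ℋ →L[ℂ] ℋ} (hX : Commutes D Aop X Y)
    (hW : Commutes D Aop W V) :
    Commutes D Aop (X.comp W) (X.comp V + Y.comp W) := by
  intro ξ
  obtain ⟨hWm, eW⟩ := hW ξ
  obtain ⟨hXm, eX⟩ := hX ⟨W (ξ : ℋ), hWm⟩
  refine ⟨hXm, ?_⟩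
  rw [show (⟨(X.comp W) (ξ : ℋ), hXm⟩ : D) = ⟨X (W (ξ : ℋ)), hXm⟩ from rfl, eX, eW]
  simp [map_add]
  abel

lemma Commutes.sum' {ι : Type*} (s : Finset ι) (f g : ι → ℋ →L[ℂ] ℋ)
    (h : ∀ i ∈ s, Commutes D Aop (f i) (g i)) :
    Commutes D Aop (∑ i ∈ s, f i) (∑ i ∈ s, g i) := by
  classical
  induction s using Finset.induction_on with
  | empty => simpa using Commutes.zero' D Aop
  | @insert a s' hnot ih =>
    rw [Finset.sum_insert hnot, Finset.sum_insert hnot]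
    exact (h a (Finset.mem_insert_self a s')).add' D Aop
      (ih fun i hi => h i (Finset.mem_insert_of_mem hi))

lemma Commutes.nsmul' (m : ℕ) {X Y : ℋ →L[ℂ] ℋ} (h : Commutes D Aop X Y) :
    Commutes D Aop (m • X) (m • Y) := by
  induction m with
  | zero => simpa using Commutes.zero' D Aop
  | succ m ih =>
    rw [succ_nsmul, succ_nsmul]
    exact ih.add' D Aop h

-- Chain closure lemmas

lemma chain_zero (X : ℋ →L[ℂ] ℋ) : ChainN D Aop 0 X :=
  ⟨fun _ => X, rfl, by omega⟩

lemma chain_mono {m n : ℕ} (h : m ≤ n) {X : ℋ →L[ℂ] ℋ} (hX : ChainN D Aop n X) :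
    ChainN D Aop m X := by
  obtain ⟨Y, hY0, hch⟩ := hX
  exact ⟨Y, hY0, fun j hj => hch j (lt_of_lt_of_le hj h)⟩

lemma chain_succ_iff {n : ℕ} {X : ℋ →L[ℂ] ℋ} :
    ChainN D Aop (n + 1) X ↔ ∃ Y, Commutes D Aop X Y ∧ ChainN D Aop n Y := by
  constructor
  · rintro ⟨Y, hY0, hch⟩
    refine ⟨Y 1, by rw [← hY0]; exact hch 0 (Nat.succ_pos n), ?_⟩
    exact ⟨fun j => Y (j + 1), rfl, fun j hj => hch (j + 1) (by omega)⟩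
  · rintro ⟨Y, hXY, ⟨V, hV0, hch⟩⟩
    refine ⟨fun j => if j = 0 then X else V (j - 1), by simp, ?_⟩
    intro j hj
    match j with
    | 0 =>
      simp only [if_pos rfl, if_neg (Nat.one_ne_zero)]
      rw [show (1 : ℕ) - 1 = 0 from rfl, hV0]
      exact hXY
    | (j + 1) =>
      simp only [if_neg (Nat.succ_ne_zero j), if_neg (Nat.succ_ne_zero (j + 1))]
      rw [show j + 1 - 1 = j from rfl, show j + 1 + 1 - 1 = j + 1 from rfl]
      exact hch j (by omega)

lemma chain_add {n : ℕ} {X W : ℋ →L[ℂ] ℋ} (hX : ChainN D Aop n X)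
    (hW : ChainN D Aop n W) : ChainN D Aop n (X + W) := by
  obtain ⟨Y, hY0, hYc⟩ := hX
  obtain ⟨V, hV0, hVc⟩ := hW
  exact ⟨fun j => Y j + V j, by show Y 0 + V 0 = X + W; rw [hY0, hV0],
    fun j hj => (hYc j hj).add' D Aop (hVc j hj)⟩

lemma chain_neg {n : ℕ} {X : ℋ →L[ℂ] ℋ} (hX : ChainN D Aop n X) :
    ChainN D Aop n (-X) := by
  obtain ⟨Y, hY0, hYc⟩ := hX
  exact ⟨fun j => -(Y j), by show -(Y 0) = -X; rw [hY0], fun j hj => (hYc j hj).neg' D Aop⟩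

lemma chain_comp {n : ℕ} {X W : ℋ →L[ℂ] ℋ} (hX : ChainN D Aop n X)
    (hW : ChainN D Aop n W) : ChainN D Aop n (X.comp W) := by
  obtain ⟨Y, hY0, hYc⟩ := hX
  obtain ⟨V, hV0, hVc⟩ := hW
  refine ⟨fun j => ∑ i ∈ Finset.range (j + 1), j.choose i • ((Y i).comp (V (j - i))),
    by simp [hY0, hV0], ?_⟩
  intro j hj
  have hterm : ∀ i ∈ Finset.range (j + 1),
      Commutes D Aop (j.choose i • ((Y i).comp (V (j - i))))
        (j.choose i • ((Y i).comp (V (j - i + 1)) + (Y (i + 1)).comp (V (j - i)))) := by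
    intro i hi
    have hij : i ≤ j := Nat.lt_succ_iff.mp (Finset.mem_range.mp hi)
    have hYi : Commutes D Aop (Y i) (Y (i + 1)) := hYc i (by omega)
    have hVji : Commutes D Aop (V (j - i)) (V (j - i + 1)) := hVc (j - i) (by omega)
    exact (hYi.comp' D Aop hVji).nsmul' D Aop (m := j.choose i)
  have hsum := Commutes.sum' D Aop (Finset.range (j + 1)) _ _ hterm
  -- identify target with the binomial sum at j+1
  have htarget : (∑ i ∈ Finset.range (j + 1),
      j.choose i • ((Y i).comp (V (j - i + 1)) + (Y (i + 1)).comp (V (j - i))))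
      = ∑ i ∈ Finset.range (j + 2), (j + 1).choose i • ((Y i).comp (V (j + 1 - i))) := by
    rw [binom_rec (fun i => (Y i).comp (V (j + 1 - i))) j, ← Finset.sum_add_distrib]
    refine Finset.sum_congr rfl fun i hi => ?_
    have hij : i ≤ j := Nat.lt_succ_iff.mp (Finset.mem_range.mp hi)
    have h1 : j - i + 1 = j + 1 - i := by omega
    have h2 : j + 1 - (i + 1) = j - i := by omega
    rw [smul_add, h1, h2]
  show Commutes D Aop (∑ i ∈ Finset.range (j + 1), j.choose i • ((Y i).comp (V (j - i))))
    (∑ i ∈ Finset.range (j + 2), (j + 1).choose i • ((Y i).comp (V (j + 1 - i))))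
  rw [← htarget]
  exact hsum

-- Perturbation by a bounded operator

lemma commutes_shift (B : ℋ →L[ℂ] ℋ) (X Y : ℋ →L[ℂ] ℋ) :
    Commutes D (Aop + B.toLinearMap.comp D.subtype) X Y ↔
      Commutes D Aop X (Y + X.comp B - B.comp X) := by
  constructor
  · intro h ξ
    obtain ⟨hm, he⟩ := h ξ
    refine ⟨hm, ?_⟩
    simp only [LinearMap.add_apply, LinearMap.comp_apply, LinearMap.coe_comp,
      ContinuousLinearMap.coe_coe, Submodule.coe_subtype] at he
    have he' : Aop ⟨X (ξ : ℋ), hm⟩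
        = X (Aop ξ) + X (B (ξ : ℋ)) + Y (ξ : ℋ) - B (X (ξ : ℋ)) := by
      have := eq_sub_of_add_eq he
      rw [this, map_add]
    rw [he']
    simp only [ContinuousLinearMap.add_apply, ContinuousLinearMap.sub_apply,
      ContinuousLinearMap.comp_apply, ContinuousLinearMap.coe_sub',
      ContinuousLinearMap.coe_add']
    abel
  · intro h ξ
    obtain ⟨hm, he⟩ := h ξ
    refine ⟨hm, ?_⟩
    simp only [ContinuousLinearMap.add_apply, ContinuousLinearMap.sub_apply,
      ContinuousLinearMap.comp_apply] at he
    simp only [LinearMap.add_apply, LinearMap.coe_comp,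
      ContinuousLinearMap.coe_coe, Submodule.coe_subtype, Function.comp_apply]
    rw [he, map_add]
    abel

lemma commutes_shift' (B : ℋ →L[ℂ] ℋ) (X W : ℋ →L[ℂ] ℋ) :
    Commutes D Aop X W ↔
      Commutes D (Aop + B.toLinearMap.comp D.subtype) X (W + B.comp X - X.comp B) := by
  rw [commutes_shift D Aop B X (W + B.comp X - X.comp B)]
  constructor
  · intro h
    have : W + B.comp X - X.comp B + X.comp B - B.comp X = W := by abel
    rwa [this]
  · intro h
    have : W + B.comp X - X.comp B + X.comp B - B.comp X = W := by abel
    rwa [this] at h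

/-- Forward transfer of chains under a bounded perturbation. -/
lemma chain_transfer (B : ℋ →L[ℂ] ℋ) :
    ∀ n X, ChainN D Aop n X → (n = 0 ∨ ChainN D Aop (n - 1) B) →
      ChainN D (Aop + B.toLinearMap.comp D.subtype) n X := by
  intro n
  induction n with
  | zero => intro X _ _; exact chain_zero D _ X
  | succ n ih =>
    intro X hX hB
    have hBn : ChainN D Aop n B := by
      rcases hB with h | h
      · omega
      · simpa using h
    obtain ⟨Y, hXY, hYn⟩ := (chain_succ_iff D Aop).mp hX
    have hXn : ChainN D Aop n X := chain_mono D Aop (Nat.le_succ n) hX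
    set W := Y + B.comp X - X.comp B with hW
    have hXW : Commutes D (Aop + B.toLinearMap.comp D.subtype) X W :=
      (commutes_shift' D Aop B X Y).mp hXY
    have hWn : ChainN D Aop n W := by
      rw [hW]
      have h1 : ChainN D Aop n (B.comp X) := chain_comp D Aop hBn hXn
      have h2 : ChainN D Aop n (X.comp B) := chain_comp D Aop hXn hBn
      have h3 := chain_add D Aop hYn h1
      have h4 := chain_add D Aop h3 (chain_neg D Aop h2)
      have : Y + B.comp X + -(X.comp B) = Y + B.comp X - X.comp B := by abel
      rwa [this] at h4
    have hWn' : ChainN D (Aop + B.toLinearMap.comp D.subtype) n W := by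
      apply ih W hWn
      rcases n with _ | n
      · exact Or.inl rfl
      · exact Or.inr (chain_mono D Aop (by omega) hBn)
    exact (chain_succ_iff D _).mpr ⟨W, hXW, hWn'⟩

lemma Aop_unshift (B : ℋ →L[ℂ] ℋ) :
    (Aop + B.toLinearMap.comp D.subtype) + (-B).toLinearMap.comp D.subtype = Aop := by
  ext u
  simp

/-- Self-adjointness of the perturbed operator. -/
lemma perturbed_selfAdjoint (hA : IsSelfAdjointOp D Aop) (B : ℋ →L[ℂ] ℋ)
    (hBsa : IsSelfAdjoint B) :
    IsSelfAdjointOp D (Aop + B.toLinearMap.comp D.subtype) := by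
  obtain ⟨hD, hsym, hmax⟩ := hA
  have hBsym : ∀ x y : ℋ, ⟪B x, y⟫ = ⟪x, B y⟫ := fun x y => hBsa.isSymmetric x y
  refine ⟨hD, ?_, ?_⟩
  · intro u v
    simp only [LinearMap.add_apply, LinearMap.coe_comp,
      ContinuousLinearMap.coe_coe, Submodule.coe_subtype, Function.comp_apply]
    rw [inner_add_left, inner_add_right, hsym u v, hBsym (u : ℋ) (v : ℋ)]
  · intro v w h
    apply hmax v (w - B v)
    intro u
    have hu := h u
    simp only [LinearMap.add_apply, LinearMap.coe_comp,
      ContinuousLinearMap.coe_coe, Submodule.coe_subtype, Function.comp_apply] at hu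
    rw [inner_add_left, hBsym (u : ℋ) v] at hu
    rw [inner_sub_right]
    linear_combination hu

end Stmt16

/-- if `A` is self-adjoint and `B = B* ∈ C_{p−1}(A)`, then `A + B` (with
domain `Dom A`) is self-adjoint and `C_k(A) = C_k(A+B)` for every `k = 0,1,…,p`. -/
theorem stmt_16 {ℋ : Type*} [NormedAddCommGroup ℋ] [InnerProductSpace ℂ ℋ] [CompleteSpace ℋ]
    (D : Submodule ℂ ℋ) (Aop : ↥D →ₗ[ℂ] ℋ) (hA : IsSelfAdjointOp D Aop)
    (p : ℕ) (hp : 0 < p) (B : ℋ →L[ℂ] ℋ) (hBsa : IsSelfAdjoint B)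
    (hBC : InCn D Aop (p - 1) B) :
    IsSelfAdjointOp D (Aop + B.toLinearMap.comp D.subtype) ∧
      ∀ k, k ≤ p → ∀ X : ℋ →L[ℂ] ℋ,
        InCn D Aop k X ↔ InCn D (Aop + B.toLinearMap.comp D.subtype) k X := by
  classical
  have hA' : IsSelfAdjointOp D (Aop + B.toLinearMap.comp D.subtype) :=
    Stmt16.perturbed_selfAdjoint D Aop hA B hBsa
  refine ⟨hA', ?_⟩
  intro k hk X
  have hBchain : Stmt16.ChainN D Aop (p - 1) B := Stmt16.inCn_chainN D Aop hA hBC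
  constructor
  · intro hX
    apply Stmt16.chainN_inCn D _ hA'
    apply Stmt16.chain_transfer D Aop B k X (Stmt16.inCn_chainN D Aop hA hX)
    rcases Nat.eq_zero_or_pos k with h0 | hpos
    · exact Or.inl h0
    · exact Or.inr (Stmt16.chain_mono D Aop (by omega) hBchain)
  · intro hX
    have hBchain' : Stmt16.ChainN D (Aop + B.toLinearMap.comp D.subtype) (p - 1) B := by
      apply Stmt16.chain_transfer D Aop B (p - 1) B hBchain
      rcases Nat.eq_zero_or_pos (p - 1) with h0 | hpos
      · exact Or.inl h0
      · exact Or.inr (Stmt16.chain_mono D Aop (by omega) hBchain)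
    have hnB : Stmt16.ChainN D (Aop + B.toLinearMap.comp D.subtype) (p - 1) (-B) :=
      Stmt16.chain_neg D _ hBchain'
    have htrans := Stmt16.chain_transfer D (Aop + B.toLinearMap.comp D.subtype) (-B) k X
      (Stmt16.inCn_chainN D _ hA' hX) ?side
    case side =>
      rcases Nat.eq_zero_or_pos k with h0 | hpos
      · exact Or.inl h0
      · exact Or.inr (Stmt16.chain_mono D _ (by omega) hnB)
    rw [Stmt16.Aop_unshift D Aop B] at htrans
    exact Stmt16.chainN_inCn D Aop hA htrans
end

section
/- Let A be a self-adjoint operator in ℋ, p ∈ ℤ₊, and B ∈ C_p(A). Then for every ξ ∈ Dom(A^p) one has Bξ ∈ Dom(A^p) and A^p B ξ = Σ_{k=0}^{p} C(p,k) (ad_A^{p−k} B) A^k ξ. -/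
open scoped ComplexOrder
open Classical

variable {ℋ : Type*} [NormedAddCommGroup ℋ] [InnerProductSpace ℂ ℋ] [CompleteSpace ℋ]

set_option linter.unusedSectionVars false
set_option maxHeartbeats 1000000
open Filter Topology

section Basics
variable (D : Submodule ℂ ℋ) (Aop : ↥D →ₗ[ℂ] ℋ)

lemma aext_mem {ψ : ℋ} (h : ψ ∈ D) : Aext D Aop ψ = Aop ⟨ψ, h⟩ := dif_pos h

lemma aext_add {u v : ℋ} (hu : u ∈ D) (hv : v ∈ D) :
    Aext D Aop (u + v) = Aext D Aop u + Aext D Aop v := by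
  rw [aext_mem D Aop hu, aext_mem D Aop hv, aext_mem D Aop (D.add_mem hu hv)]
  have : (⟨u + v, D.add_mem hu hv⟩ : ↥D) = ⟨u, hu⟩ + ⟨v, hv⟩ := rfl
  rw [this, map_add]

lemma aext_smul (c : ℂ) {u : ℋ} (hu : u ∈ D) :
    Aext D Aop (c • u) = c • Aext D Aop u := by
  rw [aext_mem D Aop hu, aext_mem D Aop (D.smul_mem c hu)]
  have : (⟨c • u, D.smul_mem c hu⟩ : ↥D) = c • ⟨u, hu⟩ := rfl
  rw [this, map_smul]

lemma aext_sub {u v : ℋ} (hu : u ∈ D) (hv : v ∈ D) :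
    Aext D Aop (u - v) = Aext D Aop u - Aext D Aop v := by
  rw [aext_mem D Aop hu, aext_mem D Aop hv, aext_mem D Aop (D.sub_mem hu hv)]
  have : (⟨u - v, D.sub_mem hu hv⟩ : ↥D) = ⟨u, hu⟩ - ⟨v, hv⟩ := rfl
  rw [this, map_sub]

end Basics

section SA
variable (D : Submodule ℂ ℋ) (Aop : ↥D →ₗ[ℂ] ℋ) (hA : IsSelfAdjointOp D Aop)
include hA

lemma sym {u v : ℋ} (hu : u ∈ D) (hv : v ∈ D) :
    (inner ℂ (Aext D Aop u) v : ℂ) = inner ℂ u (Aext D Aop v) := by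
  rw [aext_mem D Aop hu, aext_mem D Aop hv]; exact hA.2.1 ⟨u, hu⟩ ⟨v, hv⟩

lemma dense_eq {v w : ℋ} (h : ∀ u ∈ D, (inner ℂ u v : ℂ) = inner ℂ u w) : v = w := by
  have hS : IsClosed {u : ℋ | (inner ℂ u (v - w) : ℂ) = 0} :=
    isClosed_eq (Continuous.inner continuous_id continuous_const) continuous_const
  have hsub : (D : Set ℋ) ⊆ {u : ℋ | (inner ℂ u (v - w) : ℂ) = 0} := by
    intro u hu
    simp only [Set.mem_setOf_eq, inner_sub_right, h u hu, sub_self]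
  have hall : ∀ u : ℋ, (inner ℂ u (v - w) : ℂ) = 0 := by
    intro u
    have h1 : closure (D : Set ℋ) ⊆ {u : ℋ | (inner ℂ u (v - w) : ℂ) = 0} :=
      closure_minimal hsub hS
    have := hA.1.closure_eq
    rw [this] at h1
    exact h1 (Set.mem_univ u)
  have := hall (v - w)
  rw [inner_self_eq_zero, sub_eq_zero] at this
  exact this

lemma weak_mem {v w : ℋ} (h : ∀ u ∈ D, (inner ℂ (Aext D Aop u) v : ℂ) = inner ℂ u w) :
    v ∈ D ∧ Aext D Aop v = w := by
  have hv : v ∈ D := by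
    apply hA.2.2 v w
    intro u
    have := h u u.2
    rwa [aext_mem D Aop u.2] at this
  refine ⟨hv, dense_eq D Aop hA fun u hu => ?_⟩
  rw [← sym D Aop hA hu hv, h u hu]

lemma closed_graph {u : ℕ → ℋ} {x w : ℋ} (hmem : ∀ m, u m ∈ D)
    (hu : Tendsto u atTop (𝓝 x))
    (hw : Tendsto (fun m => Aext D Aop (u m)) atTop (𝓝 w)) :
    x ∈ D ∧ Aext D Aop x = w := by
  apply weak_mem D Aop hA
  intro v hv
  have h1 : Tendsto (fun m => (inner ℂ (Aext D Aop v) (u m) : ℂ)) atTop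
      (𝓝 (inner ℂ (Aext D Aop v) x)) := tendsto_const_nhds.inner hu
  have h2 : Tendsto (fun m => (inner ℂ (Aext D Aop v) (u m) : ℂ)) atTop
      (𝓝 (inner ℂ v w)) := by
    have : (fun m => (inner ℂ (Aext D Aop v) (u m) : ℂ))
        = fun m => (inner ℂ v (Aext D Aop (u m)) : ℂ) := by
      funext m; exact sym D Aop hA hv (hmem m)
    rw [this]
    exact tendsto_const_nhds.inner hw
  exact tendsto_nhds_unique h1 h2

end SA

section Resolvent
variable (D : Submodule ℂ ℋ) (Aop : ↥D →ₗ[ℂ] ℋ) (hA : IsSelfAdjointOp D Aop)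

/-- The scalar `i(n+1)`. -/
noncomputable def cc (n : ℕ) : ℂ := ((n + 1 : ℕ) : ℂ) * Complex.I

lemma cc_re (n : ℕ) : (cc n).re = 0 := by simp [cc]

lemma cc_im (n : ℕ) : (cc n).im = ((n : ℝ) + 1) := by push_cast [cc]; simp

lemma cc_norm (n : ℕ) : ‖cc n‖ = ((n : ℝ) + 1) := by
  rw [cc, norm_mul, Complex.norm_I, mul_one, Complex.norm_natCast]
  push_cast; ring

include hA

lemma inner_self_real {u : ℋ} (hu : u ∈ D) :
    (inner ℂ (Aext D Aop u) u : ℂ).im = 0 := by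
  have hsym : (starRingEnd ℂ) (inner ℂ (Aext D Aop u) u : ℂ) = inner ℂ (Aext D Aop u) u := by
    rw [inner_conj_symm]
    exact (sym D Aop hA hu hu).symm
  exact Complex.conj_eq_iff_im.mp hsym

lemma normsq (n : ℕ) {u : ℋ} (hu : u ∈ D) :
    ‖Aext D Aop u + cc n • u‖ ^ 2
      = ‖Aext D Aop u‖ ^ 2 + ((n : ℝ) + 1) ^ 2 * ‖u‖ ^ 2 := by
  have hre : RCLike.re (inner ℂ (Aext D Aop u) (cc n • u) : ℂ) = 0 := by
    rw [inner_smul_right]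
    have him := inner_self_real D Aop hA hu
    simp [RCLike.re_to_complex, Complex.mul_re, cc_re, cc_im, him]
  rw [norm_add_sq (𝕜 := ℂ), hre, norm_smul, cc_norm]
  have hn : (0:ℝ) ≤ (n : ℝ) + 1 := by positivity
  rw [mul_pow]
  ring

lemma inj_bound (n : ℕ) {u : ℋ} (hu : u ∈ D) :
    ((n : ℝ) + 1) * ‖u‖ ≤ ‖Aext D Aop u + cc n • u‖ ∧
      ‖Aext D Aop u‖ ≤ ‖Aext D Aop u + cc n • u‖ := by
  have h := normsq D Aop hA n hu
  have h1 : (((n : ℝ) + 1) * ‖u‖) ^ 2 ≤ ‖Aext D Aop u + cc n • u‖ ^ 2 := by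
    rw [h, mul_pow]; nlinarith [sq_nonneg ‖Aext D Aop u‖]
  have h2 : ‖Aext D Aop u‖ ^ 2 ≤ ‖Aext D Aop u + cc n • u‖ ^ 2 := by
    rw [h]
    have : (0:ℝ) ≤ ((n : ℝ) + 1) ^ 2 * ‖u‖ ^ 2 := by positivity
    linarith
  constructor
  · have ha : (0:ℝ) ≤ ((n : ℝ) + 1) * ‖u‖ := by positivity
    nlinarith [norm_nonneg (Aext D Aop u + cc n • u)]
  · nlinarith [norm_nonneg (Aext D Aop u + cc n • u), norm_nonneg (Aext D Aop u)]

lemma res_unique (n : ℕ) {u v : ℋ} (hu : u ∈ D) (hv : v ∈ D)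
    (h : Aext D Aop u + cc n • u = Aext D Aop v + cc n • v) : u = v := by
  have hd : Aext D Aop (u - v) + cc n • (u - v) = 0 := by
    rw [aext_sub D Aop hu hv, smul_sub]
    calc Aext D Aop u - Aext D Aop v + (cc n • u - cc n • v)
        = (Aext D Aop u + cc n • u) - (Aext D Aop v + cc n • v) := by abel
      _ = 0 := by rw [h, sub_self]
  have hb := (inj_bound D Aop hA n (D.sub_mem hu hv)).1
  rw [hd, norm_zero] at hb
  have : ‖u - v‖ ≤ 0 := by nlinarith [norm_nonneg (u - v)]
  have huv : u - v = 0 := by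
    have := le_antisymm this (norm_nonneg _)
    rwa [norm_eq_zero] at this
  exact sub_eq_zero.mp huv

lemma res_surj (n : ℕ) : ∀ ψ : ℋ, ∃ u, u ∈ D ∧ Aext D Aop u + cc n • u = ψ := by
  set T : ↥D →ₗ[ℂ] ℋ := Aop + cc n • D.subtype with hT
  have hTapp : ∀ u : ↥D, T u = Aext D Aop ↑u + cc n • ↑u := by
    intro u
    simp only [hT, LinearMap.add_apply, LinearMap.smul_apply, Submodule.coe_subtype]
    rw [aext_mem D Aop u.2]
  have hclosed : IsClosed ((LinearMap.range T : Submodule ℂ ℋ) : Set ℋ) := by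
    apply IsSeqClosed.isClosed
    intro ψ x hmem hlim
    choose u hu using hmem
    have hψc : CauchySeq ψ := hlim.cauchySeq
    have hdist : ∀ m l, dist ((u m : ℋ)) ((u l : ℋ)) ≤ dist (ψ m) (ψ l) := by
      intro m l
      have hsub : Aext D Aop ((u m : ℋ) - (u l : ℋ)) + cc n • ((u m : ℋ) - (u l : ℋ))
          = ψ m - ψ l := by
        rw [aext_sub D Aop (u m).2 (u l).2, smul_sub]
        rw [← hu m, ← hu l, hTapp, hTapp]
        abel
      have hb := (inj_bound D Aop hA n (D.sub_mem (u m).2 (u l).2)).1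
      rw [hsub] at hb
      have h1 : ‖(u m : ℋ) - (u l : ℋ)‖ ≤ ((n : ℝ) + 1) * ‖(u m : ℋ) - (u l : ℋ)‖ := by
        have := norm_nonneg ((u m : ℋ) - (u l : ℋ))
        nlinarith
      rw [dist_eq_norm, dist_eq_norm]
      linarith
    have hAdist : ∀ m l, dist (Aext D Aop (u m)) (Aext D Aop (u l)) ≤ dist (ψ m) (ψ l) := by
      intro m l
      have hsub : Aext D Aop ((u m : ℋ) - (u l : ℋ)) + cc n • ((u m : ℋ) - (u l : ℋ))
          = ψ m - ψ l := by
        rw [aext_sub D Aop (u m).2 (u l).2, smul_sub]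
        rw [← hu m, ← hu l, hTapp, hTapp]
        abel
      have hb := (inj_bound D Aop hA n (D.sub_mem (u m).2 (u l).2)).2
      rw [hsub] at hb
      rw [dist_eq_norm, dist_eq_norm, ← aext_sub D Aop (u m).2 (u l).2]
      exact hb
    have hcu : CauchySeq (fun m => (u m : ℋ)) := by
      rw [Metric.cauchySeq_iff] at hψc ⊢
      intro ε hε
      obtain ⟨N, hN⟩ := hψc ε hε
      exact ⟨N, fun m hm l hl => lt_of_le_of_lt (hdist m l) (hN m hm l hl)⟩
    have hcA : CauchySeq (fun m => Aext D Aop (u m)) := by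
      rw [Metric.cauchySeq_iff] at hψc ⊢
      intro ε hε
      obtain ⟨N, hN⟩ := hψc ε hε
      exact ⟨N, fun m hm l hl => lt_of_le_of_lt (hAdist m l) (hN m hm l hl)⟩
    obtain ⟨a, ha⟩ := cauchySeq_tendsto_of_complete hcu
    obtain ⟨w, hw⟩ := cauchySeq_tendsto_of_complete hcA
    have hgraph := closed_graph D Aop hA (fun m => (u m).2) ha hw
    -- x = w + cc n • a
    have hx : Tendsto ψ atTop (𝓝 (w + cc n • a)) := by
      have : ψ = fun m => Aext D Aop (u m) + cc n • (u m : ℋ) := by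
        funext m; rw [← hu m, hTapp]
      rw [this]
      exact hw.add ((ha.const_smul (cc n)))
    have hxeq : x = w + cc n • a := tendsto_nhds_unique hlim hx
    refine ⟨⟨a, hgraph.1⟩, ?_⟩
    rw [hTapp]
    show Aext D Aop a + cc n • a = x
    rw [hgraph.2, hxeq]
  have horth : (LinearMap.range T)ᗮ = ⊥ := by
    rw [Submodule.eq_bot_iff]
    intro v hv
    rw [Submodule.mem_orthogonal] at hv
    have hweak : ∀ u ∈ D, (inner ℂ (Aext D Aop u) v : ℂ)
        = inner ℂ u ((-(starRingEnd ℂ) (cc n)) • v) := by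
      intro u hu
      have h0 := hv (T ⟨u, hu⟩) (LinearMap.mem_range_self T ⟨u, hu⟩)
      rw [hTapp] at h0
      simp only [inner_add_left, inner_smul_left] at h0
      rw [inner_smul_right]
      have : (inner ℂ (Aext D Aop u) v : ℂ)
          = -((starRingEnd ℂ) (cc n) * inner ℂ (u : ℋ) v) := by
        push_cast at h0 ⊢
        linear_combination h0
      rw [this]; ring
    obtain ⟨hvD, hvA⟩ := weak_mem D Aop hA hweak
    have h0 := hv (T ⟨v, hvD⟩) (LinearMap.mem_range_self T ⟨v, hvD⟩)
    rw [hTapp] at h0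
    simp only [hvA, inner_add_left, inner_smul_left, inner_neg_left, inner_smul_left] at h0
    -- h0 : conj(-conj(cc)) ⟪v,v⟫ + conj(cc) ⟪v,v⟫ = 0
    have hc : ((starRingEnd ℂ) (-(starRingEnd ℂ) (cc n)) + (starRingEnd ℂ) (cc n))
        * (inner ℂ (v : ℋ) v : ℂ) = 0 := by
      push_cast at h0 ⊢
      linear_combination h0
    have hcne : ((starRingEnd ℂ) (-(starRingEnd ℂ) (cc n)) + (starRingEnd ℂ) (cc n)) ≠ 0 := by
      simp only [map_neg, Complex.conj_conj]
      intro hcontra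
      have him := congrArg Complex.im hcontra
      simp only [Complex.add_im, Complex.neg_im, Complex.conj_im, Complex.zero_im, cc_im] at him
      have hpos : (0:ℝ) < (n:ℝ) + 1 := by positivity
      linarith
    have := mul_eq_zero.mp hc
    rcases this with h | h
    · exact absurd h hcne
    · rwa [inner_self_eq_zero] at h
  have htop : LinearMap.range T = ⊤ := by
    have h1 : (LinearMap.range T).topologicalClosure = ⊤ :=
      Submodule.topologicalClosure_eq_top_iff.mpr horth
    rw [← IsClosed.submodule_topologicalClosure_eq hclosed, h1]
  intro ψ
  have : ψ ∈ LinearMap.range T := htop ▸ Submodule.mem_top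
  obtain ⟨u, hu⟩ := this
  exact ⟨(u : ℋ), u.2, by rw [← hTapp u, hu]⟩

end Resolvent

section Cn
variable (D : Submodule ℂ ℋ) (Aop : ↥D →ₗ[ℂ] ℋ) (hA : IsSelfAdjointOp D Aop)

/-- The resolvent `(A + i(n+1))⁻¹`. -/
noncomputable def Rn (hA : IsSelfAdjointOp D Aop) (n : ℕ) (ψ : ℋ) : ℋ :=
  Classical.choose (res_surj D Aop hA n ψ)

include hA

lemma Rn_mem (n : ℕ) (ψ : ℋ) : Rn D Aop hA n ψ ∈ D :=
  (Classical.choose_spec (res_surj D Aop hA n ψ)).1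

lemma Rn_spec (n : ℕ) (ψ : ℋ) :
    Aext D Aop (Rn D Aop hA n ψ) + cc n • Rn D Aop hA n ψ = ψ :=
  (Classical.choose_spec (res_surj D Aop hA n ψ)).2

lemma Rn_eq (n : ℕ) {u ψ : ℋ} (hu : u ∈ D) (h : Aext D Aop u + cc n • u = ψ) :
    Rn D Aop hA n ψ = u :=
  res_unique D Aop hA n (Rn_mem D Aop hA n ψ) hu (by rw [Rn_spec D Aop hA n ψ, h])

lemma Rn_sub (n : ℕ) (ψ φ : ℋ) :
    Rn D Aop hA n (ψ - φ) = Rn D Aop hA n ψ - Rn D Aop hA n φ := by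
  have hψ := Rn_spec D Aop hA n ψ
  have hφ := Rn_spec D Aop hA n φ
  apply Rn_eq D Aop hA n (D.sub_mem (Rn_mem D Aop hA n ψ) (Rn_mem D Aop hA n φ))
  rw [aext_sub D Aop (Rn_mem D Aop hA n ψ) (Rn_mem D Aop hA n φ), smul_sub]
  set rψ := Rn D Aop hA n ψ with hrψ
  set rφ := Rn D Aop hA n φ with hrφ
  rw [← hψ, ← hφ]
  abel

lemma Rn_norm (n : ℕ) (ψ : ℋ) : ((n : ℝ) + 1) * ‖Rn D Aop hA n ψ‖ ≤ ‖ψ‖ := by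
  have := (inj_bound D Aop hA n (Rn_mem D Aop hA n ψ)).1
  rwa [Rn_spec D Aop hA n ψ] at this

lemma Rn_comm (n : ℕ) {u : ℋ} (hu : u ∈ D) :
    Rn D Aop hA n (Aext D Aop u) = Aext D Aop (Rn D Aop hA n u) := by
  set r := Rn D Aop hA n u with hr
  have hrmem : r ∈ D := Rn_mem D Aop hA n u
  have hspec : Aext D Aop r + cc n • r = u := Rn_spec D Aop hA n u
  have hArD : Aext D Aop r ∈ D := by
    have : Aext D Aop r = u - cc n • r := by rw [← hspec]; abel
    rw [this]
    exact D.sub_mem hu (D.smul_mem _ hrmem)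
  apply Rn_eq D Aop hA n hArD
  have : Aext D Aop (Aext D Aop r) = Aext D Aop u - cc n • Aext D Aop r := by
    have h1 : Aext D Aop r = u - cc n • r := by rw [← hspec]; abel
    calc Aext D Aop (Aext D Aop r) = Aext D Aop (u - cc n • r) := by rw [← h1]
      _ = Aext D Aop u - Aext D Aop (cc n • r) := aext_sub D Aop hu (D.smul_mem _ hrmem)
      _ = Aext D Aop u - cc n • Aext D Aop r := by rw [aext_smul D Aop (cc n) hrmem]
  rw [this]
  abel

/-- The approximation operator `C_n = i(n+1) (A + i(n+1))⁻¹`. -/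
noncomputable def CnOp (hA : IsSelfAdjointOp D Aop) (n : ℕ) (ψ : ℋ) : ℋ :=
  cc n • Rn D Aop hA n ψ

lemma Cn_mem (n : ℕ) (ψ : ℋ) : CnOp D Aop hA n ψ ∈ D :=
  D.smul_mem _ (Rn_mem D Aop hA n ψ)

lemma Cn_norm (n : ℕ) (ψ : ℋ) : ‖CnOp D Aop hA n ψ‖ ≤ ‖ψ‖ := by
  rw [CnOp, norm_smul, cc_norm]
  exact Rn_norm D Aop hA n ψ

lemma Cn_sub (n : ℕ) (ψ φ : ℋ) :
    CnOp D Aop hA n (ψ - φ) = CnOp D Aop hA n ψ - CnOp D Aop hA n φ := by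
  rw [CnOp, CnOp, CnOp, Rn_sub D Aop hA n, smul_sub]

lemma Cn_comm (n : ℕ) {u : ℋ} (hu : u ∈ D) :
    Aext D Aop (CnOp D Aop hA n u) = CnOp D Aop hA n (Aext D Aop u) := by
  rw [CnOp, CnOp, aext_smul D Aop (cc n) (Rn_mem D Aop hA n u), Rn_comm D Aop hA n hu]

lemma Cn_dist_of_mem (n : ℕ) {u : ℋ} (hu : u ∈ D) :
    ((n : ℝ) + 1) * ‖CnOp D Aop hA n u - u‖ ≤ ‖Aext D Aop u‖ := by
  have hspec : Aext D Aop (Rn D Aop hA n u) + cc n • Rn D Aop hA n u = u :=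
    Rn_spec D Aop hA n u
  have hcomm := Rn_comm D Aop hA n hu
  have h1 : CnOp D Aop hA n u - u = -(Rn D Aop hA n (Aext D Aop u)) := by
    rw [CnOp, hcomm]
    set r := Rn D Aop hA n u with hr
    rw [← hspec]
    abel
  rw [h1, norm_neg]
  exact Rn_norm D Aop hA n (Aext D Aop u)

lemma tendsto_Cn (χ : ℋ) :
    Tendsto (fun n => CnOp D Aop hA n χ) atTop (𝓝 χ) := by
  rw [Metric.tendsto_atTop]
  intro ε hε
  obtain ⟨d, hd⟩ := Metric.dense_iff.mp hA.1 χ (ε/3) (by positivity)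
  obtain ⟨hdball, hdD⟩ := hd
  rw [Metric.mem_ball, dist_comm, dist_eq_norm] at hdball
  obtain ⟨N, hN⟩ := exists_nat_gt (3 * ‖Aext D Aop d‖ / ε)
  refine ⟨N, fun n hn => ?_⟩
  have h1 : ‖CnOp D Aop hA n χ - CnOp D Aop hA n d‖ ≤ ‖χ - d‖ := by
    rw [← Cn_sub D Aop hA n]
    exact Cn_norm D Aop hA n (χ - d)
  have h2 : ‖CnOp D Aop hA n d - d‖ < ε/3 := by
    have hb := Cn_dist_of_mem D Aop hA n hdD
    have hpos : (0:ℝ) < (n : ℝ) + 1 := by positivity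
    have hNn : (3 * ‖Aext D Aop d‖ / ε) < (n : ℝ) + 1 := by
      have : (N : ℝ) ≤ n := by exact_mod_cast hn
      linarith
    have h3 : 3 * ‖Aext D Aop d‖ < ε * ((n:ℝ) + 1) := by
      rw [div_lt_iff₀ hε] at hNn
      linarith [hNn]
    calc ‖CnOp D Aop hA n d - d‖ ≤ ‖Aext D Aop d‖ / ((n:ℝ) + 1) := by
          rw [le_div_iff₀ hpos]; linarith [hb]
      _ < ε/3 := by
          rw [div_lt_iff₀ hpos]
          nlinarith
  rw [dist_eq_norm]
  calc ‖CnOp D Aop hA n χ - χ‖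
      ≤ ‖CnOp D Aop hA n χ - CnOp D Aop hA n d‖ + ‖CnOp D Aop hA n d - d‖ + ‖d - χ‖ := by
        have := norm_add₃_le (a := CnOp D Aop hA n χ - CnOp D Aop hA n d)
          (b := CnOp D Aop hA n d - d) (c := d - χ)
        simpa using this
    _ < ε := by
        have h3 : ‖d - χ‖ < ε/3 := by rw [norm_sub_rev]; exact hdball
        linarith

end Cn

section DomPowBasics
variable (D : Submodule ℂ ℋ) (Aop : ↥D →ₗ[ℂ] ℋ)

lemma mem_domPow_zero_s17 (ψ : ℋ) : ψ ∈ domPow D Aop 0 := by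
  intro k hk; omega

lemma mem_domPow_one_s17 {ψ : ℋ} : ψ ∈ domPow D Aop 1 ↔ ψ ∈ D := by
  constructor
  · intro h; simpa using h 0 (by omega)
  · intro h k hk
    interval_cases k
    simpa using h

lemma domPow_succ {ψ : ℋ} {n : ℕ} :
    ψ ∈ domPow D Aop (n + 1) ↔ ψ ∈ D ∧ Aext D Aop ψ ∈ domPow D Aop n := by
  constructor
  · intro h
    refine ⟨by simpa using h 0 (by omega), fun k hk => ?_⟩
    have := h (k + 1) (by omega)
    simpa [Function.iterate_succ_apply] using this
  · rintro ⟨h0, h1⟩ k hk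
    cases k with
    | zero => simpa using h0
    | succ k => simpa [Function.iterate_succ_apply] using h1 k (by omega)

lemma domPow_mono_s17 {m n : ℕ} (h : m ≤ n) : domPow D Aop n ⊆ domPow D Aop m :=
  fun _ hψ k hk => hψ k (lt_of_lt_of_le hk h)

lemma iter_add {n : ℕ} {u v : ℋ} (hu : u ∈ domPow D Aop n) (hv : v ∈ domPow D Aop n) :
    ∀ k ≤ n, (Aext D Aop)^[k] (u + v) = (Aext D Aop)^[k] u + (Aext D Aop)^[k] v := by
  intro k hk
  induction k with
  | zero => simp
  | succ k ih =>
    rw [Function.iterate_succ_apply', Function.iterate_succ_apply',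
      Function.iterate_succ_apply', ih (by omega),
      aext_add D Aop (hu k (by omega)) (hv k (by omega))]

lemma domPow_add_s17 {n : ℕ} {u v : ℋ} (hu : u ∈ domPow D Aop n) (hv : v ∈ domPow D Aop n) :
    u + v ∈ domPow D Aop n := by
  intro k hk
  rw [iter_add D Aop hu hv k (by omega)]
  exact D.add_mem (hu k hk) (hv k hk)

lemma commForm_one (X : ℋ →L[ℂ] ℋ) (ξ η : ℋ) :
    commForm D Aop X 1 ξ η
      = (inner ℂ (X ξ) (Aext D Aop η) : ℂ) - inner ℂ (X (Aext D Aop ξ)) η := by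
  rw [commForm, Finset.sum_range_succ, Finset.sum_range_one]
  norm_num
  ring

end DomPowBasics

lemma pascal_sum_s17 {E : Type*} [AddCommMonoid E] [Module ℂ E] (p : ℕ) (g : ℕ → E) :
    ∑ i ∈ Finset.range (p + 2), (((p+1).choose i : ℕ) : ℂ) • g i
      = ∑ i ∈ Finset.range (p + 1), ((p.choose i : ℕ) : ℂ) • g i
        + ∑ i ∈ Finset.range (p + 1), ((p.choose i : ℕ) : ℂ) • g (i + 1) := by
  rw [Finset.sum_range_succ' (fun i => (((p+1).choose i : ℕ) : ℂ) • g i) (p+1)]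
  have h1 : ∀ i ∈ Finset.range (p+1), (((p+1).choose (i+1) : ℕ) : ℂ) • g (i+1)
      = ((p.choose i : ℕ) : ℂ) • g (i+1) + ((p.choose (i+1) : ℕ) : ℂ) • g (i+1) := by
    intro i _
    rw [Nat.choose_succ_succ]
    push_cast
    rw [add_smul]
  rw [Finset.sum_congr rfl h1, Finset.sum_add_distrib]
  have h2 : (((p+1).choose 0 : ℕ) : ℂ) • g 0
        + (∑ i ∈ Finset.range (p+1), ((p.choose (i+1) : ℕ) : ℂ) • g (i+1))
      = ∑ i ∈ Finset.range (p+1), ((p.choose i : ℕ) : ℂ) • g i := by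
    have e0 : (((p+1).choose 0 : ℕ) : ℂ) • g 0 = ((p.choose 0 : ℕ) : ℂ) • g 0 := by
      rw [Nat.choose_zero_right, Nat.choose_zero_right]
    rw [e0, add_comm, ← Finset.sum_range_succ' (fun i => ((p.choose i : ℕ) : ℂ) • g i) (p+1),
      Finset.sum_range_succ (fun i => ((p.choose i : ℕ) : ℂ) • g i) (p+1),
      Nat.choose_succ_self]
    push_cast
    rw [zero_smul, add_zero]
  rw [add_assoc, add_comm (∑ i ∈ Finset.range (p+1), ((p.choose (i+1) : ℕ) : ℂ) • g (i+1))
    ((((p+1).choose 0 : ℕ) : ℂ) • g 0), h2, add_comm]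

section MainLemmas
variable (D : Submodule ℂ ℋ) (Aop : ↥D →ₗ[ℂ] ℋ) (hA : IsSelfAdjointOp D Aop)
include hA

lemma Cn_domPow {k : ℕ} {ξ : ℋ} (hξ : ξ ∈ domPow D Aop k) (n : ℕ) :
    CnOp D Aop hA n ξ ∈ domPow D Aop (k + 1) ∧
      ∀ j ≤ k, (Aext D Aop)^[j] (CnOp D Aop hA n ξ)
        = CnOp D Aop hA n ((Aext D Aop)^[j] ξ) := by
  induction k generalizing ξ with
  | zero =>
    refine ⟨(mem_domPow_one_s17 D Aop).mpr (Cn_mem D Aop hA n ξ), ?_⟩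
    intro j hj
    interval_cases j
    simp
  | succ k ih =>
    obtain ⟨hξD, hξA⟩ := (domPow_succ D Aop).mp hξ
    obtain ⟨ih1, ih2⟩ := ih hξA
    have hcomm : Aext D Aop (CnOp D Aop hA n ξ) = CnOp D Aop hA n (Aext D Aop ξ) :=
      Cn_comm D Aop hA n hξD
    constructor
    · rw [domPow_succ]
      exact ⟨Cn_mem D Aop hA n ξ, by rw [hcomm]; exact ih1⟩
    · intro j hj
      cases j with
      | zero => simp
      | succ j =>
        rw [Function.iterate_succ_apply, Function.iterate_succ_apply, hcomm,
          ih2 j (by omega)]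

lemma c1_step {B Z1 : ℋ →L[ℂ] ℋ} (h1 : AdExistsN D Aop 1 B Z1) {ξ : ℋ} (hξ : ξ ∈ D) :
    B ξ ∈ D ∧ Aext D Aop (B ξ) = Z1 ξ + B (Aext D Aop ξ) := by
  apply weak_mem D Aop hA
  intro u hu
  have h := h1 ξ ((mem_domPow_one_s17 D Aop).mpr hξ) u ((mem_domPow_one_s17 D Aop).mpr hu)
  rw [commForm_one] at h
  have h2 : (inner ℂ (B ξ) (Aext D Aop u) : ℂ) = inner ℂ (Z1 ξ + B (Aext D Aop ξ)) u := by
    rw [inner_add_left]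
    linear_combination h
  calc (inner ℂ (Aext D Aop u) (B ξ) : ℂ)
      = (starRingEnd ℂ) (inner ℂ (B ξ) (Aext D Aop u) : ℂ) := (inner_conj_symm _ _).symm
    _ = (starRingEnd ℂ) (inner ℂ (Z1 ξ + B (Aext D Aop ξ)) u : ℂ) := by rw [h2]
    _ = inner ℂ u (Z1 ξ + B (Aext D Aop ξ)) := inner_conj_symm _ _

lemma ad_step {B Z1 W : ℋ →L[ℂ] ℋ} {k : ℕ}
    (h1 : AdExistsN D Aop 1 B Z1) (hk : AdExistsN D Aop (k + 1) B W) :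
    AdExistsN D Aop k Z1 W := by
  have step1 : ∀ ξ ∈ domPow D Aop (k+1), ∀ η ∈ domPow D Aop (k+1),
      commForm D Aop Z1 k ξ η = (inner ℂ (W ξ) η : ℂ) := by
    intro ξ hξ η hη
    rw [← hk ξ hξ η hη]
    have hterm : ∀ j ∈ Finset.range (k+1),
        ((k.choose j : ℕ) : ℂ) * (-1)^j
            * (inner ℂ (Z1 ((Aext D Aop)^[j] ξ)) ((Aext D Aop)^[k - j] η) : ℂ)
        = ((k.choose j : ℕ) : ℂ) • ((-1:ℂ)^j
              * inner ℂ (B ((Aext D Aop)^[j] ξ)) ((Aext D Aop)^[k + 1 - j] η))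
          + ((k.choose j : ℕ) : ℂ) • ((-1:ℂ)^(j+1)
              * inner ℂ (B ((Aext D Aop)^[j+1] ξ)) ((Aext D Aop)^[k + 1 - (j+1)] η)) := by
      intro j hj
      rw [Finset.mem_range] at hj
      have hξj : (Aext D Aop)^[j] ξ ∈ D := hξ j (by omega)
      have hηj : (Aext D Aop)^[k-j] η ∈ D := hη (k-j) (by omega)
      have h := h1 _ ((mem_domPow_one_s17 D Aop).mpr hξj) _ ((mem_domPow_one_s17 D Aop).mpr hηj)
      rw [commForm_one] at h
      have e1 : Aext D Aop ((Aext D Aop)^[k-j] η) = (Aext D Aop)^[k + 1 - j] η := by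
        rw [show k + 1 - j = (k - j) + 1 from by omega, Function.iterate_succ_apply']
      have e2 : Aext D Aop ((Aext D Aop)^[j] ξ) = (Aext D Aop)^[j+1] ξ :=
        (Function.iterate_succ_apply' _ _ _).symm
      have e3 : k + 1 - (j + 1) = k - j := by omega
      rw [e1, e2] at h
      rw [e3, ← h]
      simp only [smul_eq_mul]
      ring
    have key : commForm D Aop B (k+1) ξ η
        = ∑ i ∈ Finset.range (k+2), (((k+1).choose i : ℕ) : ℂ)
            • ((-1:ℂ)^i * inner ℂ (B ((Aext D Aop)^[i] ξ)) ((Aext D Aop)^[k + 1 - i] η)) := by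
      rw [commForm]
      apply Finset.sum_congr rfl
      intro i _
      rw [smul_eq_mul, mul_assoc]
    rw [commForm, Finset.sum_congr rfl hterm, Finset.sum_add_distrib, key,
      pascal_sum_s17 k (fun i => (-1:ℂ)^i * inner ℂ (B ((Aext D Aop)^[i] ξ)) ((Aext D Aop)^[k + 1 - i] η))]
  intro ξ hξ η hη
  have hseq : ∀ n, commForm D Aop Z1 k (CnOp D Aop hA n ξ) (CnOp D Aop hA n η)
      = (inner ℂ (W (CnOp D Aop hA n ξ)) (CnOp D Aop hA n η) : ℂ) := fun n =>
    step1 _ (Cn_domPow D Aop hA hξ n).1 _ (Cn_domPow D Aop hA hη n).1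
  have hl1 : Tendsto (fun n => (inner ℂ (W (CnOp D Aop hA n ξ)) (CnOp D Aop hA n η) : ℂ))
      atTop (𝓝 (inner ℂ (W ξ) η)) :=
    (((W.continuous.tendsto ξ).comp (tendsto_Cn D Aop hA ξ)).inner (tendsto_Cn D Aop hA η))
  have hl2 : Tendsto (fun n => commForm D Aop Z1 k (CnOp D Aop hA n ξ) (CnOp D Aop hA n η))
      atTop (𝓝 (commForm D Aop Z1 k ξ η)) := by
    simp only [commForm]
    apply tendsto_finset_sum
    intro j hj
    rw [Finset.mem_range] at hj
    have e1 : ∀ n, (Aext D Aop)^[j] (CnOp D Aop hA n ξ)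
        = CnOp D Aop hA n ((Aext D Aop)^[j] ξ) := fun n =>
      (Cn_domPow D Aop hA hξ n).2 j (by omega)
    have e2 : ∀ n, (Aext D Aop)^[k - j] (CnOp D Aop hA n η)
        = CnOp D Aop hA n ((Aext D Aop)^[k - j] η) := fun n =>
      (Cn_domPow D Aop hA hη n).2 (k - j) (by omega)
    have : (fun n => ((k.choose j : ℕ) : ℂ) * (-1)^j
          * (inner ℂ (Z1 ((Aext D Aop)^[j] (CnOp D Aop hA n ξ)))
              ((Aext D Aop)^[k - j] (CnOp D Aop hA n η)) : ℂ))
        = fun n => ((k.choose j : ℕ) : ℂ) * (-1)^j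
          * (inner ℂ (Z1 (CnOp D Aop hA n ((Aext D Aop)^[j] ξ)))
              (CnOp D Aop hA n ((Aext D Aop)^[k - j] η)) : ℂ) := by
      funext n
      rw [e1 n, e2 n]
    rw [this]
    apply Tendsto.const_mul
    exact ((Z1.continuous.tendsto _).comp (tendsto_Cn D Aop hA _)).inner
      (tendsto_Cn D Aop hA _)
  have hl2' : Tendsto (fun n => (inner ℂ (W (CnOp D Aop hA n ξ)) (CnOp D Aop hA n η) : ℂ))
      atTop (𝓝 (commForm D Aop Z1 k ξ η)) := by
    have := hl2
    rwa [show (fun n => commForm D Aop Z1 k (CnOp D Aop hA n ξ) (CnOp D Aop hA n η))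
      = (fun n => (inner ℂ (W (CnOp D Aop hA n ξ)) (CnOp D Aop hA n η) : ℂ)) from funext hseq] at this
  exact tendsto_nhds_unique hl2' hl1

end MainLemmas

theorem master (D : Submodule ℂ ℋ) (Aop : ↥D →ₗ[ℂ] ℋ) (hA : IsSelfAdjointOp D Aop)
    (p : ℕ) :
    ∀ (B : ℋ →L[ℂ] ℋ) (Z : ℕ → ℋ →L[ℂ] ℋ),
      (∀ k, k ≤ p → AdExistsN D Aop k B (Z k)) →
      ∀ ξ ∈ domPow D Aop p, B ξ ∈ domPow D Aop p ∧
        (Aext D Aop)^[p] (B ξ) =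
          ∑ k ∈ Finset.range (p + 1), (p.choose k : ℂ) • Z (p - k) ((Aext D Aop)^[k] ξ) := by
  induction p with
  | zero =>
    intro B Z hZ ξ _
    refine ⟨mem_domPow_zero_s17 D Aop _, ?_⟩
    have h0 := hZ 0 le_rfl ξ (mem_domPow_zero_s17 D Aop ξ) (B ξ - Z 0 ξ) (mem_domPow_zero_s17 D Aop _)
    rw [commForm, Finset.sum_range_one] at h0
    simp only [Function.iterate_zero, id_eq, Nat.choose_self, Nat.cast_one, pow_zero,
      one_mul, Nat.sub_self] at h0
    have hz : (inner ℂ (B ξ - Z 0 ξ) (B ξ - Z 0 ξ) : ℂ) = 0 := by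
      rw [inner_sub_left, h0, sub_self]
    rw [inner_self_eq_zero, sub_eq_zero] at hz
    simpa using hz
  | succ p IH =>
    intro B Z hZ
    have h1 : AdExistsN D Aop 1 B (Z 1) := hZ 1 (by omega)
    have hZB : ∀ k, k ≤ p → AdExistsN D Aop k B (Z k) := fun k hk => hZ k (by omega)
    have hZ1 : ∀ k, k ≤ p → AdExistsN D Aop k (Z 1) ((fun m => Z (m+1)) k) :=
      fun k hk => ad_step D Aop hA h1 (hZ (k+1) (by omega))
    have TB := IH B Z hZB
    have TZ := IH (Z 1) (fun m => Z (m+1)) hZ1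
    intro ξ hξ
    have hξp : ξ ∈ domPow D Aop p := domPow_mono_s17 D Aop (by omega) hξ
    have hξD : ξ ∈ D := by simpa using hξ 0 (by omega)
    have hAξ : Aext D Aop ξ ∈ domPow D Aop p := ((domPow_succ D Aop).mp hξ).2
    obtain ⟨hBξD, hABξ⟩ := c1_step D Aop hA h1 hξD
    obtain ⟨hZ1mem, hZ1eq⟩ := TZ ξ hξp
    obtain ⟨hBAmem, hBAeq⟩ := TB (Aext D Aop ξ) hAξ
    have hsum_mem : Z 1 ξ + B (Aext D Aop ξ) ∈ domPow D Aop p :=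
      domPow_add_s17 D Aop hZ1mem hBAmem
    have hmem : B ξ ∈ domPow D Aop (p+1) := by
      rw [domPow_succ]
      exact ⟨hBξD, by rw [hABξ]; exact hsum_mem⟩
    refine ⟨hmem, ?_⟩
    rw [Function.iterate_succ_apply, hABξ,
      iter_add D Aop hZ1mem hBAmem p le_rfl, hZ1eq, hBAeq]
    rw [show p + 1 + 1 = p + 2 from rfl,
      pascal_sum_s17 p (fun i => Z (p + 1 - i) ((Aext D Aop)^[i] ξ))]
    congr 1
    · apply Finset.sum_congr rfl
      intro j hj
      rw [Finset.mem_range] at hj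
      have e : p - j + 1 = p + 1 - j := by omega
      show ((p.choose j : ℕ) : ℂ) • Z (p - j + 1) ((Aext D Aop)^[j] ξ)
          = ((p.choose j : ℕ) : ℂ) • Z (p + 1 - j) ((Aext D Aop)^[j] ξ)
      rw [e]
    · apply Finset.sum_congr rfl
      intro j hj
      rw [Finset.mem_range] at hj
      rw [← Function.iterate_succ_apply]
      have e : p - j = p + 1 - (j + 1) := by omega
      show ((p.choose j : ℕ) : ℂ) • Z (p - j) ((Aext D Aop)^[j+1] ξ)
          = ((p.choose j : ℕ) : ℂ) • Z (p + 1 - (j + 1)) ((Aext D Aop)^[j+1] ξ)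
      rw [e]

/-- if `B ∈ C_p(A)` (with `ad_A^k B = Z k` for `k ≤ p`), then for every
`ξ ∈ Dom(A^p)` one has `Bξ ∈ Dom(A^p)` and
`A^p B ξ = Σ_{k=0}^{p} C(p,k) (ad_A^{p−k} B) A^k ξ`. -/
theorem stmt_17 {ℋ : Type*} [NormedAddCommGroup ℋ] [InnerProductSpace ℂ ℋ] [CompleteSpace ℋ]
    (D : Submodule ℂ ℋ) (Aop : ↥D →ₗ[ℂ] ℋ) (hA : IsSelfAdjointOp D Aop)
    (p : ℕ) (B : ℋ →L[ℂ] ℋ) (Z : ℕ → ℋ →L[ℂ] ℋ)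
    (hZ : ∀ k, k ≤ p → AdExistsN D Aop k B (Z k)) :
    ∀ ξ ∈ domPow D Aop p, B ξ ∈ domPow D Aop p ∧
      (Aext D Aop)^[p] (B ξ) =
        ∑ k ∈ Finset.range (p + 1), (p.choose k : ℂ) • Z (p - k) ((Aext D Aop)^[k] ξ) :=
  master D Aop hA p B Z hZ
end
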